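/- arXiv:2603.20272 — 6 statements merged into one kernel-verified Lean document; each statement's English description precedes it below -/
import Mathlib

section
/- Let V be a finite-dimensional ℚ-vector space carrying a mixed ℚ-Hodge structure (W_•, F^•). Then there exists exactly one bigraduation (I^{p,q}) of (V, W_•, F^•) satisfying the conjugation condition (Deligne's canonical bigraduation). -/
open scoped TensorProduct

noncomputable section

/-- Complex conjugation on `ℂ`, as a `ℚ`-linear map. -/
def conjQ : ℂ →ₗ[ℚ] ℂ where
  toFun z := (starRingEnd ℂ) z
  map_add' x y := map_add _ x y
  map_smul' q z := by
    simp [Rat.smul_def]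

variable (V : Type) [AddCommGroup V] [Module ℚ V]

/-- The conjugate-linear involution of the complexification `ℂ ⊗[ℚ] V`,
given by complex conjugation on the `ℂ` factor (viewed as a `ℚ`-linear map). -/
def sigmaV : ℂ ⊗[ℚ] V →ₗ[ℚ] ℂ ⊗[ℚ] V :=
  TensorProduct.map conjQ (LinearMap.id : V →ₗ[ℚ] V)

/-- The `ℂ`-subspace generated by the conjugate of a `ℂ`-subspace of `ℂ ⊗[ℚ] V`;
since conjugation is conjugate-linear, this is just the image of the subspace. -/
def conjSpan (S : Submodule ℂ (ℂ ⊗[ℚ] V)) : Submodule ℂ (ℂ ⊗[ℚ] V) :=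
  Submodule.span ℂ (⇑(sigmaV V) '' (S : Set (ℂ ⊗[ℚ] V)))

/-- The `ℂ`-subspace of `ℂ ⊗[ℚ] V` corresponding to `ℂ ⊗[ℚ] (W k)`. -/
def WC (W : ℤ → Submodule ℚ V) (k : ℤ) : Submodule ℂ (ℂ ⊗[ℚ] V) :=
  Submodule.span ℂ ((fun v : V => (1 : ℂ) ⊗ₜ[ℚ] v) '' (W k : Set V))

/-- A mixed `ℚ`-Hodge structure on `V`: an increasing exhaustive weight filtration `W`
by `ℚ`-subspaces of `V`, a decreasing exhaustive Hodge filtration `F` by `ℂ`-subspaces of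
`ℂ ⊗[ℚ] V`, such that for every `n` and `p`, the images of `F^p ∩ (ℂ ⊗ W_n)` and of
`σ (F^{n+1-p} ∩ (ℂ ⊗ W_n))` in `Gr_n = (ℂ ⊗ W_n)/(ℂ ⊗ W_{n-1})` form an internal direct
sum decomposition of `Gr_n` (stated in the lattice of subspaces of `ℂ ⊗[ℚ] V`). -/
structure IsMixedHodgeStructure (W : ℤ → Submodule ℚ V)
    (F : ℤ → Submodule ℂ (ℂ ⊗[ℚ] V)) : Prop where
  mono_W : Monotone W
  anti_F : Antitone F
  W_eventually_bot : ∃ a : ℤ, ∀ k ≤ a, W k = ⊥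
  W_eventually_top : ∃ b : ℤ, ∀ k : ℤ, b ≤ k → W k = ⊤
  F_eventually_top : ∃ a : ℤ, ∀ p ≤ a, F p = ⊤
  F_eventually_bot : ∃ b : ℤ, ∀ p : ℤ, b ≤ p → F p = ⊥
  graded_sup : ∀ n p : ℤ,
    (F p ⊓ WC V W n) ⊔ conjSpan V (F (n + 1 - p) ⊓ WC V W n) ⊔ WC V W (n - 1)
      = WC V W n
  graded_inf : ∀ n p : ℤ,
    ((F p ⊓ WC V W n) ⊔ WC V W (n - 1)) ⊓
        (conjSpan V (F (n + 1 - p) ⊓ WC V W n) ⊔ WC V W (n - 1))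
      = WC V W (n - 1)

/-- The subspace `⊕_{r<p, s<q} I^{r,s}`. -/
def lowerPieces (I : ℤ × ℤ → Submodule ℂ (ℂ ⊗[ℚ] V)) (p q : ℤ) :
    Submodule ℂ (ℂ ⊗[ℚ] V) :=
  ⨆ rs ∈ {rs : ℤ × ℤ | rs.1 < p ∧ rs.2 < q}, I rs

/-- A bigraduation of the mixed Hodge structure `(V, W, F)`: a family `I^{p,q}` of
`ℂ`-subspaces of `ℂ ⊗[ℚ] V`, only finitely many nonzero, forming an internal direct sum
decomposition of `ℂ ⊗[ℚ] V`, with `ℂ ⊗ W_k = ⊕_{p+q ≤ k} I^{p,q}` and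
`F^r = ⊕_{p ≥ r} I^{p,q}`. -/
structure IsBigraduation (W : ℤ → Submodule ℚ V) (F : ℤ → Submodule ℂ (ℂ ⊗[ℚ] V))
    (I : ℤ × ℤ → Submodule ℂ (ℂ ⊗[ℚ] V)) : Prop where
  finite : {pq : ℤ × ℤ | I pq ≠ ⊥}.Finite
  internal : DirectSum.IsInternal I
  weight : ∀ k : ℤ, WC V W k = ⨆ pq ∈ {pq : ℤ × ℤ | pq.1 + pq.2 ≤ k}, I pq
  hodge : ∀ r : ℤ, F r = ⨆ pq ∈ {pq : ℤ × ℤ | r ≤ pq.1}, I pq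

/-- The conjugation condition: for all `(p,q)`, the images of `I^{p,q}` and of
`σ(I^{q,p})` in `V_ℂ / ⊕_{r<p,s<q} I^{r,s}` coincide. -/
def ConjugationCondition (I : ℤ × ℤ → Submodule ℂ (ℂ ⊗[ℚ] V)) : Prop :=
  ∀ p q : ℤ,
    I (p, q) ⊔ lowerPieces V I p q = conjSpan V (I (q, p)) ⊔ lowerPieces V I p q

namespace MHS

variable {V}

theorem sigma_tmul (z : ℂ) (v : V) :
    sigmaV V (z ⊗ₜ[ℚ] v) = (starRingEnd ℂ) z ⊗ₜ[ℚ] v := rfl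

theorem sigma_sigma (x : ℂ ⊗[ℚ] V) : sigmaV V (sigmaV V x) = x := by
  induction x with
  | zero => simp
  | tmul z v => simp [sigma_tmul]
  | add x y hx hy => simp [map_add, hx, hy]

theorem sigma_smul (c : ℂ) (x : ℂ ⊗[ℚ] V) :
    sigmaV V (c • x) = (starRingEnd ℂ) c • sigmaV V x := by
  induction x with
  | zero => simp
  | tmul z v =>
      rw [TensorProduct.smul_tmul', sigma_tmul, sigma_tmul, TensorProduct.smul_tmul']
      simp
  | add x y hx hy => simp [smul_add, map_add, hx, hy]

/-- `{x | σ x ∈ S}` as a `ℂ`-submodule. -/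
def conjPre (S : Submodule ℂ (ℂ ⊗[ℚ] V)) : Submodule ℂ (ℂ ⊗[ℚ] V) where
  carrier := {x | sigmaV V x ∈ S}
  add_mem' hx hy := by simpa [map_add] using add_mem hx hy
  zero_mem' := by simp
  smul_mem' c x hx := by
    simpa [sigma_smul] using S.smul_mem ((starRingEnd ℂ) c) hx

theorem mem_conjSpan {S : Submodule ℂ (ℂ ⊗[ℚ] V)} {x : ℂ ⊗[ℚ] V} :
    x ∈ conjSpan V S ↔ sigmaV V x ∈ S := by
  have : conjSpan V S = conjPre S := by
    apply le_antisymm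
    · rw [conjSpan, Submodule.span_le]
      rintro _ ⟨y, hy, rfl⟩
      simpa [conjPre, sigma_sigma] using hy
    · intro x hx
      have : x = sigmaV V (sigmaV V x) := (sigma_sigma x).symm
      rw [conjSpan]
      exact Submodule.subset_span ⟨sigmaV V x, hx, (sigma_sigma x)⟩
  rw [this]; rfl

/-- `conjSpan` as an order isomorphism of the lattice of `ℂ`-subspaces. -/
def conjIso : Submodule ℂ (ℂ ⊗[ℚ] V) ≃o Submodule ℂ (ℂ ⊗[ℚ] V) where
  toFun := conjSpan V
  invFun := conjSpan V
  left_inv S := by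
    ext x; rw [mem_conjSpan, mem_conjSpan, sigma_sigma]
  right_inv S := by
    ext x; rw [mem_conjSpan, mem_conjSpan, sigma_sigma]
  map_rel_iff' := by
    intro S T
    show conjSpan V S ≤ conjSpan V T ↔ S ≤ T
    constructor
    · intro h x hx
      have h1 : sigmaV V x ∈ conjSpan V S := by rw [mem_conjSpan, sigma_sigma]; exact hx
      have h2 := h h1
      rwa [mem_conjSpan, sigma_sigma] at h2
    · intro h x hx
      rw [mem_conjSpan] at hx ⊢
      exact h hx

theorem conjSpan_conjSpan (S : Submodule ℂ (ℂ ⊗[ℚ] V)) :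
    conjSpan V (conjSpan V S) = S := (conjIso (V := V)).left_inv S

theorem conjSpan_mono {S T : Submodule ℂ (ℂ ⊗[ℚ] V)} (h : S ≤ T) :
    conjSpan V S ≤ conjSpan V T := (conjIso (V := V)).monotone h

theorem conjSpan_le_iff {S T : Submodule ℂ (ℂ ⊗[ℚ] V)} :
    conjSpan V S ≤ T ↔ S ≤ conjSpan V T := by
  constructor
  · intro h; intro x hx; rw [mem_conjSpan]
    exact h (by rw [mem_conjSpan, sigma_sigma]; exact hx)
  · intro h; intro x hx
    rw [mem_conjSpan] at hx
    have := h hx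
    rw [mem_conjSpan] at this
    rwa [← sigma_sigma x]

theorem conjSpan_inf (S T : Submodule ℂ (ℂ ⊗[ℚ] V)) :
    conjSpan V (S ⊓ T) = conjSpan V S ⊓ conjSpan V T := by
  ext x; simp [mem_conjSpan, Submodule.mem_inf]

theorem conjSpan_sup (S T : Submodule ℂ (ℂ ⊗[ℚ] V)) :
    conjSpan V (S ⊔ T) = conjSpan V S ⊔ conjSpan V T :=
  (conjIso (V := V)).map_sup S T

theorem conjSpan_iSup {ι : Sort*} (f : ι → Submodule ℂ (ℂ ⊗[ℚ] V)) :
    conjSpan V (⨆ i, f i) = ⨆ i, conjSpan V (f i) := by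
  apply le_antisymm
  · rw [← conjSpan_conjSpan (⨆ i, conjSpan V (f i))]
    apply conjSpan_mono
    apply iSup_le
    intro i
    rw [← conjSpan_le_iff]
    exact le_iSup (fun i => conjSpan V (f i)) i
  · apply iSup_le
    intro i
    exact conjSpan_mono (le_iSup f i)

theorem conjSpan_bot : conjSpan V (⊥ : Submodule ℂ (ℂ ⊗[ℚ] V)) = ⊥ := by
  ext x
  rw [mem_conjSpan]
  simp only [Submodule.mem_bot]
  constructor
  · intro h
    have := congrArg (sigmaV V) h
    rwa [sigma_sigma, map_zero] at this
  · rintro rfl; simp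

theorem conjSpan_top : conjSpan V (⊤ : Submodule ℂ (ℂ ⊗[ℚ] V)) = ⊤ := by
  ext x; simp [mem_conjSpan]

variable {W : ℤ → Submodule ℚ V}

theorem conjSpan_WC (k : ℤ) : conjSpan V (WC V W k) = WC V W k := by
  have key : ∀ x ∈ WC V W k, sigmaV V x ∈ WC V W k := by
    intro x hx
    induction hx using Submodule.span_induction with
    | mem y hy =>
        obtain ⟨v, hv, rfl⟩ := hy
        rw [sigma_tmul]
        exact Submodule.subset_span ⟨v, hv, by simp⟩
    | zero => simp
    | add y z _ _ hy hz => rw [map_add]; exact add_mem hy hz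
    | smul c y _ hy => rw [sigma_smul]; exact Submodule.smul_mem _ _ hy
  ext x
  rw [mem_conjSpan]
  constructor
  · intro h
    have := key _ h
    rwa [sigma_sigma] at this
  · exact key x

theorem WC_mono (hW : Monotone W) : Monotone (WC V W) := by
  intro a b hab
  exact Submodule.span_mono (Set.image_mono (hW hab))

theorem WC_bot {k : ℤ} (h : W k = ⊥) : WC V W k = ⊥ := by
  rw [WC, h]
  simp

theorem WC_top {k : ℤ} (h : W k = ⊤) : WC V W k = ⊤ := by
  rw [WC, h, eq_top_iff]
  intro x hx
  clear hx
  induction x with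
  | zero => exact zero_mem _
  | tmul z v =>
      have : z ⊗ₜ[ℚ] v = z • ((1:ℂ) ⊗ₜ[ℚ] v) := by
        rw [TensorProduct.smul_tmul']; simp
      rw [this]
      exact Submodule.smul_mem _ _ (Submodule.subset_span ⟨v, by simp⟩)
  | add x y hx hy => exact add_mem hx hy



section Lattice

variable {α : Type*} [Lattice α] [IsModularLattice α] {J C D E : α}

/-- Transfer lemma: modular-lattice version of "x = c + d, x - d = c". -/
theorem transfer (h1 : J ⊓ D ≤ E) (h2 : (J ⊔ D) ⊓ C ≤ E) (h3 : E ≤ D) :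
    J ⊓ (C ⊔ D) ≤ E := by
  have key : (D ⊔ C) ⊓ (J ⊔ D) = D ⊔ C ⊓ (J ⊔ D) :=
    sup_inf_assoc_of_le C (le_sup_right : D ≤ J ⊔ D)
  have h4 : C ⊓ (J ⊔ D) ≤ E := le_trans (by rw [inf_comm]) h2
  have h5 : J ⊓ (C ⊔ D) ≤ (D ⊔ C) ⊓ (J ⊔ D) :=
    le_inf (le_trans inf_le_right (le_of_eq (sup_comm _ _)))
      (le_trans inf_le_left le_sup_left)
  have h6 : (D ⊔ C) ⊓ (J ⊔ D) ≤ D := by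
    rw [key]; exact sup_le le_rfl (le_trans h4 h3)
  exact le_trans (le_inf inf_le_left (le_trans h5 h6)) h1

theorem transfer' (h1 : J ⊓ D ≤ E) (h2 : C ⊓ (J ⊔ D) ≤ E) (h3 : E ≤ J) :
    (C ⊔ J) ⊓ D ≤ E := by
  have key : (J ⊔ C) ⊓ (J ⊔ D) = J ⊔ C ⊓ (J ⊔ D) :=
    sup_inf_assoc_of_le C (le_sup_left : J ≤ J ⊔ D)
  have h6 : (C ⊔ J) ⊓ D ≤ J := by
    have : (C ⊔ J) ⊓ D ≤ (J ⊔ C) ⊓ (J ⊔ D) :=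
      le_inf (le_trans inf_le_left (le_of_eq (sup_comm _ _)))
        (le_trans inf_le_right le_sup_right)
    rw [key] at this
    exact le_trans this (sup_le le_rfl (le_trans h2 h3))
  exact le_trans (le_inf h6 inf_le_right) h1

/-- Modular law in the convenient form. -/
theorem modular {a b c : α} (h : c ≤ a) : a ⊓ (b ⊔ c) = a ⊓ b ⊔ c :=
  (inf_sup_assoc_of_le b h).symm

end Lattice

section Induction

theorem int_ind_up (a : ℤ) (P : ℤ → Prop) (base : ∀ m ≤ a, P m)
    (step : ∀ m, a < m → P (m - 1) → P m) : ∀ m, P m := by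
  have key : ∀ k : ℕ, ∀ m : ℤ, m ≤ a + k → P m := by
    intro k
    induction k with
    | zero => intro m hm; exact base m (by omega)
    | succ k ih =>
        intro m hm
        rcases le_or_gt m (a + k) with h | h
        · exact ih m h
        · refine step m (by omega) (ih (m - 1) (by omega))
  intro m
  exact key (m - a).toNat m (by omega)

theorem int_ind_down (b : ℤ) (P : ℤ → Prop) (base : ∀ m, b ≤ m → P m)
    (step : ∀ m, m < b → P (m + 1) → P m) : ∀ m, P m := by
  have key : ∀ k : ℕ, ∀ m : ℤ, b - k ≤ m → P m := by
    intro k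
    induction k with
    | zero => intro m hm; exact base m (by omega)
    | succ k ih =>
        intro m hm
        rcases le_or_gt (b - k) m with h | h
        · exact ih m h
        · refine step m (by omega) (ih (m + 1) (by omega))
  intro m
  exact key (b - m).toNat m (by omega)

theorem int_strong_ind_up (a : ℤ) (P : ℤ → Prop) (base : ∀ m ≤ a, P m)
    (step : ∀ m, a < m → (∀ k < m, P k) → P m) : ∀ m, P m := by
  have key : ∀ m, ∀ k ≤ m, P k := by
    apply int_ind_up a (fun m => ∀ k ≤ m, P k)
    · intro m hm k hk; exact base k (le_trans hk hm)
    · intro m hm ih k hk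
      rcases lt_or_eq_of_le hk with h | h
      · exact ih k (by omega)
      · subst h
        exact step k hm (fun j hj => ih j (by omega))
  exact fun m => key m m le_rfl

end Induction

section SupSupport

variable {ι : Type*} {α : Type*} [CompleteLattice α]

theorem iSup_eq_biSup_support (f : ι → α) (s : Set ι) (hs : ∀ i ∉ s, f i = ⊥) :
    ⨆ i, f i = ⨆ i ∈ s, f i := by
  apply le_antisymm
  · apply iSup_le; intro i
    by_cases h : i ∈ s
    · exact le_iSup₂ (f := fun i _ => f i) i h
    · rw [hs i h]; exact bot_le
  · exact iSup₂_le fun i _ => le_iSup f i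

theorem biSup_mono_set {f : ι → α} {s t : Set ι} (h : s ⊆ t) :
    ⨆ i ∈ s, f i ≤ ⨆ i ∈ t, f i :=
  iSup₂_le fun i hi => le_iSup₂ (f := fun i _ => f i) i (h hi)

theorem iSupP_mono {f : ι → α} {P Q : ι → Prop} (h : ∀ i, P i → Q i) :
    (⨆ i, ⨆ _ : P i, f i) ≤ ⨆ i, ⨆ _ : Q i, f i :=
  iSup₂_le fun i hi => le_iSup₂ (f := fun i _ => f i) i (h i hi)

theorem biSup_le_biSup_of_subset {f : ι → α} {s : Set ι} {t : Set ι} (h : s ⊆ t) :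
    ⨆ i ∈ s, f i ≤ ⨆ i ∈ t, f i := biSup_mono_set h

end SupSupport

section SupDisj

variable {ι : Type*} {α : Type*} [CompleteLattice α] [IsModularLattice α]

theorem finset_sup_disj (f : ι → α) (D : α)
    (h : ∀ i, f i ⊓ (D ⊔ ⨆ j, ⨆ _ : j ≠ i, f j) = ⊥) :
    ∀ s : Finset ι, (⨆ i ∈ s, f i) ⊓ D = ⊥ := by
  classical
  intro s
  induction s using Finset.induction with
  | empty => simp
  | @insert a s ha ih =>
      rw [Finset.iSup_insert]
      apply le_antisymm _ bot_le
      apply transfer' (E := (⊥ : α)) (le_of_eq ih) _ bot_le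
      have hsub : (⨆ i ∈ s, f i) ≤ ⨆ j, ⨆ _ : j ≠ a, f j := by
        apply iSup₂_le
        intro i hi
        exact le_iSup₂ (f := fun j (_ : j ≠ a) => f j) i (fun e => ha (e ▸ hi))
      calc f a ⊓ ((⨆ i ∈ s, f i) ⊔ D)
          ≤ f a ⊓ (D ⊔ ⨆ j, ⨆ _ : j ≠ a, f j) := by
            apply inf_le_inf_left
            rw [sup_comm]
            exact sup_le_sup_left hsub D
        _ = ⊥ := h a

/-- If each member of a family with finite support is disjoint from `D` joined with the
rest of the family, then the whole sup is disjoint from `D`. -/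
theorem iSup_inf_eq_bot_of_disj (f : ι → α) (D : α)
    (hfin : {i | f i ≠ ⊥}.Finite)
    (h : ∀ i, f i ⊓ (D ⊔ ⨆ j, ⨆ _ : j ≠ i, f j) = ⊥) :
    (⨆ i, f i) ⊓ D = ⊥ := by
  classical
  have e : ⨆ i, f i = ⨆ i ∈ hfin.toFinset, f i := by
    apply le_antisymm
    · apply iSup_le; intro i
      by_cases hi : f i = ⊥
      · rw [hi]; exact bot_le
      · exact le_iSup₂ (f := fun i _ => f i) i (hfin.mem_toFinset.mpr hi)
    · exact iSup₂_le fun i _ => le_iSup f i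
  rw [e]
  exact finset_sup_disj f D h _

end SupDisj



section Internal

variable {ι : Type*} [DecidableEq ι] {R M : Type*} [Ring R] [AddCommGroup M] [Module R M]
variable {p : ι → Submodule R M}

theorem isInternal_biSup_inf_biSup (h : DirectSum.IsInternal p) (s t : Set ι) :
    (⨆ i ∈ s, p i) ⊓ (⨆ i ∈ t, p i) = ⨆ i ∈ s ∩ t, p i := by
  classical
  apply le_antisymm
  · intro x hx
    rw [Submodule.mem_inf] at hx
    obtain ⟨hxs, hxt⟩ := hx
    rw [Submodule.mem_biSup_iff_exists_dfinsupp (fun i => i ∈ s) p] at hxs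
    rw [Submodule.mem_biSup_iff_exists_dfinsupp (fun i => i ∈ t) p] at hxt
    obtain ⟨f, hf⟩ := hxs
    obtain ⟨g, hg⟩ := hxt
    have hinj := h.injective
    have key : (f.filter (fun i => i ∈ s)) = (g.filter (fun i => i ∈ t)) := by
      apply hinj
      show DFinsupp.lsum ℕ (M := fun i => ↥(p i)) (fun i => (p i).subtype) _
        = DFinsupp.lsum ℕ (M := fun i => ↥(p i)) (fun i => (p i).subtype) _
      rw [hf, hg]
    set F : Π₀ i, p i := f.filter (fun i => i ∈ s) with hF
    have hzero : ∀ i, i ∉ s ∩ t → F i = 0 := by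
      intro i hi
      rw [Set.mem_inter_iff] at hi
      push_neg at hi
      by_cases his : i ∈ s
      · have hit := hi his
        have : F i = (g.filter (fun i => i ∈ t)) i := by rw [key]
        rw [this, DFinsupp.filter_apply]
        simp [hit]
      · rw [hF, DFinsupp.filter_apply]
        simp [his]
    rw [Submodule.mem_biSup_iff_exists_dfinsupp (fun i => i ∈ s ∩ t) p]
    refine ⟨F, ?_⟩
    have : F.filter (fun i => i ∈ s ∩ t) = F := by
      ext i
      rw [DFinsupp.filter_apply]
      by_cases hi : i ∈ s ∩ t
      · simp [hi]
      · simp [hi, hzero i hi]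
    rw [this, ← hf]
  · apply le_inf
    · exact iSup₂_le fun i hi => le_iSup₂ (f := fun i _ => p i) i hi.1
    · exact iSup₂_le fun i hi => le_iSup₂ (f := fun i _ => p i) i hi.2

end Internal


section Main

variable {V : Type} [AddCommGroup V] [Module ℚ V]

/-- All the data of a mixed Hodge structure, with chosen bounds. -/
structure Ctx (V : Type) [AddCommGroup V] [Module ℚ V] : Type where
  W : ℤ → Submodule ℚ V
  F : ℤ → Submodule ℂ (ℂ ⊗[ℚ] V)
  hW : Monotone W
  hF : Antitone F
  a : ℤ
  ha : ∀ k ≤ a, W k = ⊥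
  b : ℤ
  hb : ∀ k, b ≤ k → W k = ⊤
  d : ℤ
  hd : ∀ p, d ≤ p → F p = ⊥
  c : ℤ
  hc : ∀ p ≤ c, F p = ⊤
  hS : ∀ n p : ℤ,
    (F p ⊓ WC V W n) ⊔ (conjSpan V (F (n + 1 - p)) ⊓ WC V W n) ⊔ WC V W (n - 1)
      = WC V W n
  hI : ∀ n p : ℤ,
    ((F p ⊓ WC V W n) ⊔ WC V W (n - 1)) ⊓
        ((conjSpan V (F (n + 1 - p)) ⊓ WC V W n) ⊔ WC V W (n - 1))
      = WC V W (n - 1)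

namespace Ctx

variable (C : Ctx V)

/-- Complexified weight filtration. -/
def WW (n : ℤ) : Submodule ℂ (ℂ ⊗[ℚ] V) := WC V C.W n

theorem WW_mono {m n : ℤ} (h : m ≤ n) : C.WW m ≤ C.WW n :=
  WC_mono C.hW h

theorem WW_bot {n : ℤ} (h : n ≤ C.a) : C.WW n = ⊥ := WC_bot (C.ha n h)

theorem WW_top {n : ℤ} (h : C.b ≤ n) : C.WW n = ⊤ := WC_top (C.hb n h)

theorem conj_WW (n : ℤ) : conjSpan V (C.WW n) = C.WW n := conjSpan_WC n

/-- The `Abar` filtration of `Gr_n`, lifted: `F^p ∩ W_n + W_{n-1}`. -/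
def Abar (p n : ℤ) : Submodule ℂ (ℂ ⊗[ℚ] V) := (C.F p ⊓ C.WW n) ⊔ C.WW (n - 1)

/-- The conjugate filtration of `Gr_n`, lifted: `σF^q ∩ W_n + W_{n-1}`. -/
def Bbar (q n : ℤ) : Submodule ℂ (ℂ ⊗[ℚ] V) :=
  (conjSpan V (C.F q) ⊓ C.WW n) ⊔ C.WW (n - 1)

theorem Abar_def (p n : ℤ) :
    C.Abar p n = (C.F p ⊓ C.WW n) ⊔ C.WW (n - 1) := rfl

theorem Bbar_def (q n : ℤ) :
    C.Bbar q n = (conjSpan V (C.F q) ⊓ C.WW n) ⊔ C.WW (n - 1) := rfl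

theorem conj_Abar (p n : ℤ) : conjSpan V (C.Abar p n) = C.Bbar p n := by
  rw [Abar, Bbar, conjSpan_sup, conjSpan_inf, conj_WW, conj_WW]

theorem conj_Bbar (q n : ℤ) : conjSpan V (C.Bbar q n) = C.Abar q n := by
  rw [Abar, Bbar, conjSpan_sup, conjSpan_inf, conj_WW, conj_WW, conjSpan_conjSpan]

theorem axS {n p q : ℤ} (h : p + q = n + 1) :
    (C.F p ⊓ C.WW n) ⊔ (conjSpan V (C.F q) ⊓ C.WW n) ⊔ C.WW (n - 1) = C.WW n := by
  have := C.hS n p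
  rw [show n + 1 - p = q by omega] at this
  exact this

theorem axI {n p q : ℤ} (h : p + q = n + 1) :
    C.Abar p n ⊓ C.Bbar q n = C.WW (n - 1) := by
  have := C.hI n p
  rw [show n + 1 - p = q by omega] at this
  exact this

theorem WW_le_Abar (p n : ℤ) : C.WW (n - 1) ≤ C.Abar p n := by
  rw [Abar_def]; exact le_sup_right

theorem WW_le_Bbar (q n : ℤ) : C.WW (n - 1) ≤ C.Bbar q n := by
  rw [Bbar_def]; exact le_sup_right

theorem Abar_le_WW (p n : ℤ) : C.Abar p n ≤ C.WW n := by
  rw [Abar_def]; exact sup_le inf_le_right (C.WW_mono (by omega))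

theorem Bbar_le_WW (q n : ℤ) : C.Bbar q n ≤ C.WW n := by
  rw [Bbar_def]; exact sup_le inf_le_right (C.WW_mono (by omega))

theorem Abar_anti {p p' n : ℤ} (h : p ≤ p') : C.Abar p' n ≤ C.Abar p n := by
  rw [Abar_def, Abar_def]
  exact sup_le (le_sup_of_le_left (inf_le_inf_right _ (C.hF h))) le_sup_right

theorem Bbar_anti {q q' n : ℤ} (h : q ≤ q') : C.Bbar q' n ≤ C.Bbar q n := by
  rw [Bbar_def, Bbar_def]
  exact sup_le (le_sup_of_le_left (inf_le_inf_right _ (conjSpan_mono (C.hF h)))) le_sup_right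

/-- `U q m = Σ_{j ≥ 0} σF^{q-j} ∩ W_{m-j}`. -/
def U (q m : ℤ) : Submodule ℂ (ℂ ⊗[ℚ] V) :=
  ⨆ j : ℕ, (conjSpan V (C.F (q - j)) ⊓ C.WW (m - j))

theorem U_le_WW (q m : ℤ) : C.U q m ≤ C.WW m :=
  iSup_le fun j => le_trans inf_le_right (C.WW_mono (by omega))

theorem U_le_U {q' m' q m : ℤ} (h1 : q' ≤ q) (h2 : m' - q' ≤ m - q) :
    C.U q' m' ≤ C.U q m := by
  apply iSup_le
  intro j
  refine le_iSup_of_le ((q - q').toNat + j) ?_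
  have e1 : q - (((q - q').toNat + j : ℕ) : ℤ) = q' - j := by
    push_cast; omega
  rw [e1]
  exact inf_le_inf le_rfl (C.WW_mono (by push_cast; omega))

theorem term_le_U {q m : ℤ} : conjSpan V (C.F q) ⊓ C.WW m ≤ C.U q m := by
  refine le_iSup_of_le 0 ?_
  norm_num

theorem U_succ (q m : ℤ) :
    C.U q m = (conjSpan V (C.F q) ⊓ C.WW m) ⊔ C.U (q - 1) (m - 1) := by
  apply le_antisymm
  · apply iSup_le
    intro j
    cases j with
    | zero =>
        apply le_sup_of_le_left
        norm_num
    | succ k =>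
        apply le_sup_of_le_right
        refine le_iSup_of_le k ?_
        have e1 : q - ((k + 1 : ℕ) : ℤ) = q - 1 - k := by push_cast; ring
        have e2 : m - ((k + 1 : ℕ) : ℤ) = m - 1 - k := by push_cast; ring
        rw [e1, e2]
  · exact sup_le C.term_le_U (C.U_le_U (by omega) (by omega))

theorem U_bot {q m : ℤ} (h : m ≤ C.a) : C.U q m = ⊥ := by
  rw [eq_bot_iff]
  apply iSup_le
  intro j
  refine le_trans inf_le_right ?_
  rw [C.WW_bot (by omega)]

/-- Key Lemma (K): for `p + q = m + 1`,
`W_m = F^p ∩ W_m + σF^q ∩ W_m + U(q-1, m-1)`. -/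
theorem lemK : ∀ m : ℤ, ∀ p q : ℤ, p + q = m + 1 →
    C.WW m = (C.F p ⊓ C.WW m) ⊔ (conjSpan V (C.F q) ⊓ C.WW m) ⊔ C.U (q - 1) (m - 1) := by
  apply int_ind_up C.a
  · intro m hm p q h
    rw [C.WW_bot hm, eq_comm, eq_bot_iff]
    refine sup_le (sup_le ?_ ?_) ?_
    · exact inf_le_right
    · exact inf_le_right
    · exact le_of_eq (C.U_bot (by omega))
  · intro m hm ih p q h
    have hK := ih p (q - 1) (by omega)
    have hSm := C.axS (n := m) (p := p) (q := q) (by omega)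
    apply le_antisymm
    · conv_lhs => rw [← hSm]
      rw [hK]
      refine sup_le (sup_le ?_ ?_) ?_
      · exact le_sup_of_le_left le_sup_left
      · exact le_sup_of_le_left le_sup_right
      · -- `W_{m-1}`-part, rewritten by induction
        refine sup_le (sup_le ?_ ?_) ?_
        · exact le_sup_of_le_left (le_sup_of_le_left
            (inf_le_inf le_rfl (C.WW_mono (by omega))))
        · exact le_sup_of_le_right C.term_le_U
        · exact le_sup_of_le_right (C.U_le_U (by omega) (by omega))
    · refine sup_le (sup_le inf_le_right inf_le_right) ?_
      exact le_trans (C.U_le_WW _ _) (C.WW_mono (by omega))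

/-- Vanishing Lemma (Z): for `p + q ≥ m + 1`, `F^p ∩ U(q, m) = ⊥`. -/
theorem lemZ : ∀ m : ℤ, ∀ p q : ℤ, m + 1 ≤ p + q → C.F p ⊓ C.U q m = ⊥ := by
  apply int_ind_up C.a
  · intro m hm p q h
    rw [C.U_bot hm, inf_bot_eq]
  · intro m hm ih p q h
    have step1 : C.F p ⊓ C.U q m ≤ C.WW (m - 1) := by
      have hA : C.F p ⊓ C.U q m ≤ C.Abar p m := by
        rw [C.Abar_def]
        exact le_sup_of_le_left (inf_le_inf le_rfl (C.U_le_WW q m))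
      have hB : C.F p ⊓ C.U q m ≤ C.Bbar (m + 1 - p) m := by
        refine le_trans inf_le_right ?_
        rw [C.U_succ, C.Bbar_def]
        apply sup_le
        · exact le_sup_of_le_left
            (inf_le_inf (conjSpan_mono (C.hF (by omega))) le_rfl)
        · exact le_sup_of_le_right (C.U_le_WW _ _)
      have := le_inf hA hB
      rwa [C.axI (n := m) (p := p) (q := m + 1 - p) (by omega)] at this
    have step2 : C.U q m ⊓ C.WW (m - 1) ≤ C.U (q - 1) (m - 1) := by
      rw [C.U_succ, inf_comm]
      rw [modular (C.U_le_WW (q - 1) (m - 1))]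
      apply sup_le
      · refine le_trans ?_ C.term_le_U
        refine le_inf ?_ ?_
        · exact le_trans inf_le_right (le_trans inf_le_left (conjSpan_mono (C.hF (by omega))))
        · exact inf_le_left
      · exact le_rfl
    rw [eq_bot_iff, ← ih p (q - 1) (by omega)]
    refine le_inf inf_le_left ?_
    exact le_trans (le_inf inf_le_right step1) step2

/-- The canonical piece `I^{p,q} = F^p ∩ W_n ∩ (σF^q ∩ W_n + U(q-1, n-2))`, `n = p+q`. -/
def R (q n : ℤ) : Submodule ℂ (ℂ ⊗[ℚ] V) :=
  (conjSpan V (C.F q) ⊓ C.WW n) ⊔ C.U (q - 1) (n - 2)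

def I (p q : ℤ) : Submodule ℂ (ℂ ⊗[ℚ] V) := C.F p ⊓ C.WW (p + q) ⊓ C.R q (p + q)

theorem R_def (q n : ℤ) :
    C.R q n = (conjSpan V (C.F q) ⊓ C.WW n) ⊔ C.U (q - 1) (n - 2) := rfl

theorem I_def (p q : ℤ) :
    C.I p q = C.F p ⊓ C.WW (p + q) ⊓ C.R q (p + q) := rfl

theorem R_le_Bbar (q n : ℤ) : C.R q n ≤ C.Bbar q n := by
  rw [R_def, Bbar_def]
  exact sup_le le_sup_left
    (le_sup_of_le_right (le_trans (C.U_le_WW _ _) (C.WW_mono (by omega))))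

theorem R_inf_WW (q n : ℤ) : C.R q n ⊓ C.WW (n - 1) = C.U q (n - 1) := by
  rw [R_def, inf_comm, modular (le_trans (C.U_le_WW _ _) (C.WW_mono (by omega)))]
  rw [C.U_succ q (n - 1)]
  have e : (n - 1 - 1 : ℤ) = n - 2 := by ring
  rw [e]
  congr 1
  rw [inf_comm, inf_assoc]
  congr 1
  exact inf_eq_right.mpr (C.WW_mono (by omega))

theorem I_le_F (p q : ℤ) : C.I p q ≤ C.F p := by
  rw [I_def]; exact le_trans inf_le_left inf_le_left

theorem I_le_WW (p q : ℤ) : C.I p q ≤ C.WW (p + q) := by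
  rw [I_def]; exact le_trans inf_le_left inf_le_right

theorem I_le_R (p q : ℤ) : C.I p q ≤ C.R q (p + q) := by
  rw [I_def]; exact inf_le_right

theorem I_inf_WW (p q : ℤ) : C.I p q ⊓ C.WW (p + q - 1) = ⊥ := by
  rw [eq_bot_iff, ← C.lemZ (p + q - 1) p q (by omega)]
  have e : (p + q - 1 : ℤ) = p + q - 1 := rfl
  refine le_inf ?_ ?_
  · exact le_trans inf_le_left (C.I_le_F p q)
  · rw [← C.R_inf_WW q (p + q)]
    exact inf_le_inf (C.I_le_R p q) le_rfl

/-- Claim 1: `Ā^p ∩ B̄^q = I^{p,q} + W_{n-1}` for `n = p + q`. -/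
theorem claim1 (p q : ℤ) :
    C.Abar p (p + q) ⊓ C.Bbar q (p + q) = C.I p q ⊔ C.WW (p + q - 1) := by
  have e1 : C.Abar p (p + q) ⊓ C.Bbar q (p + q)
      = (C.F p ⊓ C.WW (p + q) ⊓ C.Bbar q (p + q)) ⊔ C.WW (p + q - 1) := by
    rw [C.Abar_def, inf_comm, modular (C.WW_le_Bbar q (p + q)),
      inf_comm (C.Bbar q (p + q))]
  have e2 : C.Bbar q (p + q) = (C.F p ⊓ C.WW (p + q - 1)) ⊔ C.R q (p + q) := by
    rw [C.Bbar_def, C.R_def]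
    conv_lhs => rw [C.lemK (p + q - 1) p q (by omega)]
    have e : (p + q - 1 - 1 : ℤ) = p + q - 2 := by ring
    rw [e]
    apply le_antisymm
    · apply sup_le
      · exact le_sup_of_le_right le_sup_left
      · refine sup_le (sup_le ?_ ?_) ?_
        · exact le_sup_of_le_left le_rfl
        · exact le_sup_of_le_right (le_sup_of_le_left
            (inf_le_inf le_rfl (C.WW_mono (by omega))))
        · exact le_sup_of_le_right le_sup_right
    · apply sup_le
      · exact le_sup_of_le_right (le_sup_of_le_left le_sup_left)
      · apply sup_le
        · exact le_sup_of_le_left le_rfl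
        · exact le_sup_of_le_right le_sup_right
  have e3 : C.F p ⊓ C.WW (p + q) ⊓ C.Bbar q (p + q)
      = C.I p q ⊔ (C.F p ⊓ C.WW (p + q - 1)) := by
    rw [e2, sup_comm, modular (inf_le_inf le_rfl (C.WW_mono (by omega))), C.I_def]
  rw [e1, e3, sup_assoc]
  congr 1
  exact sup_eq_right.mpr inf_le_right

theorem I_le_Abar (p q : ℤ) : C.I p q ≤ C.Abar p (p + q) := by
  rw [C.Abar_def]
  exact le_sup_of_le_left inf_le_left

theorem I_le_Bbar (p q : ℤ) : C.I p q ≤ C.Bbar q (p + q) :=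
  le_trans (C.I_le_R p q) (C.R_le_Bbar q (p + q))

-- PART 5 (inside namespace MHS, section Main, namespace Ctx)

/-- `H̄^{p, n-p}`, the lifted Hodge piece of `Gr_n`. -/
def Hb (p n : ℤ) : Submodule ℂ (ℂ ⊗[ℚ] V) := C.Abar p n ⊓ C.Bbar (n - p) n

theorem Hb_def (p n : ℤ) : C.Hb p n = C.Abar p n ⊓ C.Bbar (n - p) n := rfl

theorem Hb_eq (p n : ℤ) : C.Hb p n = C.I p (n - p) ⊔ C.WW (n - 1) := by
  have h := C.claim1 p (n - p)
  rw [show p + (n - p) = n by ring] at h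
  exact h

theorem WW_le_Hb (p n : ℤ) : C.WW (n - 1) ≤ C.Hb p n :=
  le_inf (C.WW_le_Abar p n) (C.WW_le_Bbar (n - p) n)

theorem I_le_Hb (p n : ℤ) : C.I p (n - p) ≤ C.Hb p n := by
  rw [Hb_eq]; exact le_sup_left

theorem I_le_WW' {p q n : ℤ} (h : p + q ≤ n) : C.I p q ≤ C.WW n :=
  le_trans (C.I_le_WW p q) (C.WW_mono h)

theorem I_disj_WW {p q n : ℤ} (h : n ≤ p + q - 1) : C.I p q ⊓ C.WW n ≤ ⊥ :=
  le_trans (inf_le_inf le_rfl (C.WW_mono h)) (le_of_eq (C.I_inf_WW p q))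

/-- G1 : `Ā^p = H̄^p + Ā^{p+1}` in `Gr_n`. -/
theorem lemG1 (p n : ℤ) : C.Abar p n = C.Hb p n ⊔ C.Abar (p + 1) n := by
  have hsup : C.Abar (p + 1) n ⊔ C.Bbar (n - p) n = C.WW n := by
    have h := C.axS (n := n) (p := p + 1) (q := n - p) (by ring)
    apply le_antisymm (sup_le (C.Abar_le_WW _ _) (C.Bbar_le_WW _ _))
    conv_lhs => rw [← h]
    rw [C.Abar_def, C.Bbar_def]
    refine sup_le (sup_le ?_ ?_) ?_
    · exact le_sup_of_le_left le_sup_left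
    · exact le_sup_of_le_right le_sup_left
    · exact le_sup_of_le_left le_sup_right
  have e1 : C.Abar p n = C.Abar p n ⊓ (C.Abar (p + 1) n ⊔ C.Bbar (n - p) n) := by
    rw [hsup]
    exact (inf_eq_left.mpr (C.Abar_le_WW p n)).symm
  rw [e1, sup_comm (C.Abar (p+1) n), modular (C.Abar_anti (by omega)), Hb_def]

/-- Graded decomposition of `Ā^r` into Hodge pieces. -/
theorem lemGrA (n : ℤ) :
    ∀ r, C.Abar r n = (⨆ p : ℤ, ⨆ _ : r ≤ p, C.Hb p n) ⊔ C.WW (n - 1) := by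
  have hA : ∀ p, C.d ≤ p → C.Abar p n = C.WW (n - 1) := by
    intro p hp
    rw [C.Abar_def, C.hd p hp]
    simp
  apply int_ind_down C.d
  · intro r hr
    rw [hA r hr]
    apply le_antisymm le_sup_right
    apply sup_le _ le_rfl
    apply iSup₂_le
    intro p hp
    exact le_trans inf_le_left (le_of_eq (hA p (by omega)))
  · intro r hr ih
    rw [C.lemG1 r n, ih]
    rw [← sup_assoc]
    congr 1
    apply le_antisymm
    · apply sup_le
      · exact le_iSup₂ (f := fun p (_ : r ≤ p) => C.Hb p n) r le_rfl
      · exact iSup₂_le fun p hp => le_iSup₂ (f := fun p (_ : r ≤ p) => C.Hb p n) p (by omega)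
    · apply iSup₂_le
      intro p hp
      rcases eq_or_lt_of_le hp with h | h
      · subst h; exact le_sup_left
      · exact le_sup_of_le_right
          (le_iSup₂ (f := fun p (_ : r + 1 ≤ p) => C.Hb p n) p (by omega))

/-- `Gr_n` is the sum of the canonical pieces of weight `n`. -/
theorem lemGrSum (n : ℤ) :
    C.WW n = (⨆ p : ℤ, C.I p (n - p)) ⊔ C.WW (n - 1) := by
  apply le_antisymm
  · have h1 : C.Abar C.c n = C.WW n := by
      rw [C.Abar_def, C.hc C.c le_rfl, top_inf_eq]
      exact sup_eq_left.mpr (C.WW_mono (by omega))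
    rw [← h1, C.lemGrA n C.c]
    apply sup_le _ le_sup_right
    apply iSup₂_le
    intro p _
    rw [C.Hb_eq]
    exact sup_le (le_sup_of_le_left (le_iSup (fun p => C.I p (n - p)) p)) le_sup_right
  · apply sup_le
    · exact iSup_le fun p => C.I_le_WW' (by omega)
    · exact C.WW_mono (by omega)

/-- G3: independence of the Hodge pieces of `Gr_n`. -/
theorem lemG3 (p n : ℤ) :
    C.Hb p n ⊓ ((⨆ p' : ℤ, ⨆ _ : p' ≠ p, C.Hb p' n) ⊔ C.WW (n - 1)) ≤ C.WW (n - 1) := by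
  set Cc : Submodule ℂ (ℂ ⊗[ℚ] V) := ⨆ p' : ℤ, ⨆ _ : p' < p, C.Hb p' n with hCc
  set Dd : Submodule ℂ (ℂ ⊗[ℚ] V) :=
    (⨆ p' : ℤ, ⨆ _ : p < p', C.Hb p' n) ⊔ C.WW (n - 1) with hDd
  have hbound : (⨆ p' : ℤ, ⨆ _ : p' ≠ p, C.Hb p' n) ⊔ C.WW (n - 1) ≤ Cc ⊔ Dd := by
    apply sup_le
    · apply iSup₂_le
      intro p' hp'
      rcases lt_or_gt_of_ne hp' with h | h
      · exact le_sup_of_le_left (le_iSup₂ (f := fun p' (_ : p' < p) => C.Hb p' n) p' h)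
      · exact le_sup_of_le_right
          (le_sup_of_le_left (le_iSup₂ (f := fun p' (_ : p < p') => C.Hb p' n) p' h))
    · exact le_sup_of_le_right le_sup_right
  refine le_trans (inf_le_inf_left _ hbound) (transfer ?_ ?_ ?_)
  · -- Hb p n ⊓ Dd ≤ WW (n-1)
    have hD : Dd ≤ C.Abar (p + 1) n := by
      apply sup_le
      · exact iSup₂_le fun p' hp' => le_trans inf_le_left (C.Abar_anti (by omega))
      · exact C.WW_le_Abar (p + 1) n
    have := C.axI (n := n) (p := p + 1) (q := n - p) (by ring)
    rw [← this]
    exact le_inf (le_trans inf_le_right hD) (le_trans inf_le_left inf_le_right)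
  · -- (Hb p n ⊔ Dd) ⊓ Cc ≤ WW (n-1)
    have hJD : C.Hb p n ⊔ Dd ≤ C.Abar p n := by
      apply sup_le inf_le_left
      apply sup_le
      · exact iSup₂_le fun p' hp' => le_trans inf_le_left (C.Abar_anti (by omega))
      · exact C.WW_le_Abar p n
    have hC : Cc ≤ C.Bbar (n - p + 1) n :=
      iSup₂_le fun p' hp' => le_trans inf_le_right (C.Bbar_anti (by omega))
    have := C.axI (n := n) (p := p) (q := n - p + 1) (by ring)
    rw [← this]
    exact le_inf (le_trans inf_le_left hJD) (le_trans inf_le_right hC)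
  · exact le_sup_right

/-- Independence of weight-`n` pieces against each other and lower weight. -/
theorem lemDn (p n : ℤ) :
    C.I p (n - p) ⊓ (C.WW (n - 1) ⊔ ⨆ p' : ℤ, ⨆ _ : p' ≠ p, C.I p' (n - p')) = ⊥ := by
  apply le_antisymm _ bot_le
  have h1 : C.WW (n - 1) ⊔ (⨆ p' : ℤ, ⨆ _ : p' ≠ p, C.I p' (n - p'))
      ≤ (⨆ p' : ℤ, ⨆ _ : p' ≠ p, C.Hb p' n) ⊔ C.WW (n - 1) := by
    apply sup_le le_sup_right
    exact iSup₂_le fun p' hp' => le_sup_of_le_left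
      (le_trans (C.I_le_Hb p' n) (le_iSup₂ (f := fun p' (_ : p' ≠ p) => C.Hb p' n) p' hp'))
  have h2 : C.I p (n - p) ⊓ (C.WW (n - 1) ⊔ ⨆ p' : ℤ, ⨆ _ : p' ≠ p, C.I p' (n - p'))
      ≤ C.WW (n - 1) := by
    refine le_trans (inf_le_inf (C.I_le_Hb p n) h1) (C.lemG3 p n)
  have h3 : C.I p (n - p) ⊓ C.WW (n - 1) ≤ ⊥ := C.I_disj_WW (by omega)
  exact le_trans (le_inf inf_le_left h2) h3

theorem I_bot_lowweight {p q : ℤ} (h : p + q ≤ C.a) : C.I p q = ⊥ :=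
  le_bot_iff.mp (le_trans (C.I_le_WW p q) (le_of_eq (C.WW_bot h)))

theorem I_bot_highweight {p q : ℤ} (h : C.b + 1 ≤ p + q) : C.I p q = ⊥ := by
  have h1 : C.I p q ≤ C.WW (p + q - 1) := by
    rw [C.WW_top (by omega)]; exact le_top
  rw [← C.I_inf_WW p q]
  exact (inf_eq_left.mpr h1).symm

theorem I_bot_highp {p q : ℤ} (h : C.d ≤ p) : C.I p q = ⊥ :=
  le_bot_iff.mp (le_trans (C.I_le_F p q) (le_of_eq (C.hd p h)))

theorem I_bot_lowp {p q : ℤ} (h : p ≤ C.a + 1 - C.d) : C.I p q = ⊥ := by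
  rcases le_or_gt C.d q with hq | hq
  · -- `σF^q = ⊥` and `U(q-1, p+q-2) = ⊥`
    apply le_bot_iff.mp
    refine le_trans (C.I_le_R p q) ?_
    rw [C.R_def, C.hd q hq, conjSpan_bot, bot_inf_eq, bot_sup_eq]
    apply iSup_le
    intro j
    rcases le_or_gt C.d (q - 1 - j) with hj | hj
    · rw [C.hd _ hj, conjSpan_bot, bot_inf_eq]
    · refine le_trans inf_le_right ?_
      rw [C.WW_bot (by omega)]
  · exact C.I_bot_lowweight (by omega)

/-- Finiteness of the support of the canonical bigraduation. -/
theorem I_supp_finite : {pq : ℤ × ℤ | C.I pq.1 pq.2 ≠ ⊥}.Finite := by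
  apply Set.Finite.subset
    (((Set.finite_Icc (C.a + 2 - C.d) (C.d - 1)).prod
      (Set.finite_Icc (C.a + 2 - C.d) (C.b - C.a + C.d - 2))))
  rintro ⟨p, q⟩ hpq
  simp only [Set.mem_setOf_eq] at hpq
  have h1 : ¬ (p ≤ C.a + 1 - C.d) := fun h => hpq (C.I_bot_lowp h)
  have h2 : ¬ (C.d ≤ p) := fun h => hpq (C.I_bot_highp h)
  have h3 : ¬ (p + q ≤ C.a) := fun h => hpq (C.I_bot_lowweight h)
  have h4 : ¬ (C.b + 1 ≤ p + q) := fun h => hpq (C.I_bot_highweight h)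
  constructor <;> simp only [Set.mem_Icc] <;> omega

theorem I_row_supp_finite (n : ℤ) : {p : ℤ | C.I p (n - p) ≠ ⊥}.Finite := by
  apply Set.Finite.subset (Set.finite_Icc (C.a + 2 - C.d) (C.d - 1))
  intro p hp
  simp only [Set.mem_setOf_eq] at hp
  have h1 : ¬ (p ≤ C.a + 1 - C.d) := fun h => hp (C.I_bot_lowp h)
  have h2 : ¬ (C.d ≤ p) := fun h => hp (C.I_bot_highp h)
  simp only [Set.mem_Icc]
  omega

/-- The sum of weight-`n` pieces meets `W_{n-1}` trivially. -/
theorem lemDsum (n : ℤ) : (⨆ p : ℤ, C.I p (n - p)) ⊓ C.WW (n - 1) = ⊥ := by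
  apply iSup_inf_eq_bot_of_disj _ _ (C.I_row_supp_finite n)
  intro i
  exact C.lemDn i n

/-- Pieces of weight `> n` meet `W_n` trivially. -/
theorem lemEn : ∀ n : ℤ,
    (⨆ pq : ℤ × ℤ, ⨆ _ : n + 1 ≤ pq.1 + pq.2, C.I pq.1 pq.2) ⊓ C.WW n = ⊥ := by
  apply int_ind_down C.b
  · intro n hn
    have hsup : (⨆ pq : ℤ × ℤ, ⨆ _ : n + 1 ≤ pq.1 + pq.2, C.I pq.1 pq.2) = ⊥ := by
      apply le_bot_iff.mp
      exact iSup₂_le fun pq h => le_of_eq (C.I_bot_highweight (by omega))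
    rw [hsup, bot_inf_eq]
  · intro n hn ih
    set Y : Submodule ℂ (ℂ ⊗[ℚ] V) := ⨆ p : ℤ, C.I p ((n + 1) - p) with hY
    set X2 : Submodule ℂ (ℂ ⊗[ℚ] V) :=
      ⨆ pq : ℤ × ℤ, ⨆ _ : n + 2 ≤ pq.1 + pq.2, C.I pq.1 pq.2 with hX2
    have hsplit : (⨆ pq : ℤ × ℤ, ⨆ _ : n + 1 ≤ pq.1 + pq.2, C.I pq.1 pq.2) ≤ X2 ⊔ Y := by
      apply iSup₂_le
      intro pq h
      rcases le_or_gt (n + 2) (pq.1 + pq.2) with h2 | h2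
      · exact le_sup_of_le_left
          (le_iSup₂ (f := fun pq (_ : n + 2 ≤ pq.1 + pq.2) => C.I pq.1 pq.2) pq h2)
      · have : pq.2 = (n + 1) - pq.1 := by omega
        rw [this]
        exact le_sup_of_le_right (le_iSup (fun p => C.I p ((n + 1) - p)) pq.1)
    rw [eq_bot_iff, inf_comm]
    refine le_trans (inf_le_inf_left _ hsplit) (transfer ?_ ?_ bot_le)
    · -- WW n ⊓ Y ≤ ⊥
      have := C.lemDsum (n + 1)
      rw [show (n + 1 - 1 : ℤ) = n by ring] at this
      rw [inf_comm]
      exact le_of_eq this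
    · -- (WW n ⊔ Y) ⊓ X2 ≤ ⊥
      have hWY : C.WW n ⊔ Y ≤ C.WW (n + 1) := by
        apply sup_le (C.WW_mono (by omega))
        exact iSup_le fun p => C.I_le_WW' (by omega)
      have hX : X2 ⊓ C.WW (n + 1) = ⊥ := by
        have := ih
        rw [show (n + 1 + 1 : ℤ) = n + 2 by ring] at this
        exact this
      rw [← hX]
      exact le_inf inf_le_right (le_trans inf_le_left hWY)

/-- The weight filtration is the sum of pieces of total weight `≤ k`. -/
theorem weightEq : ∀ k : ℤ,
    C.WW k = ⨆ pq : ℤ × ℤ, ⨆ _ : pq.1 + pq.2 ≤ k, C.I pq.1 pq.2 := by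
  apply int_ind_up C.a
  · intro k hk
    rw [C.WW_bot hk]
    apply le_antisymm bot_le
    exact iSup₂_le fun pq h =>
      le_trans (C.I_le_WW' h) (le_of_eq (C.WW_bot hk))
  · intro k hk ih
    rw [C.lemGrSum k, ih]
    apply le_antisymm
    · apply sup_le
      · apply iSup_le
        intro p
        exact le_iSup₂ (f := fun pq (_ : pq.1 + pq.2 ≤ k) => C.I pq.1 pq.2) (p, k - p)
          (show p + (k - p) ≤ k by omega)
      · exact iSup₂_le fun pq h =>
          le_iSup₂ (f := fun pq (_ : pq.1 + pq.2 ≤ k) => C.I pq.1 pq.2) pq (by omega)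
    · apply iSup₂_le
      intro pq h
      rcases le_or_gt (pq.1 + pq.2) (k - 1) with h2 | h2
      · exact le_sup_of_le_right
          (le_iSup₂ (f := fun pq (_ : pq.1 + pq.2 ≤ k - 1) => C.I pq.1 pq.2) pq h2)
      · have e : pq.2 = k - pq.1 := by omega
        rw [e]
        exact le_sup_of_le_left (le_iSup (fun p => C.I p (k - p)) pq.1)

theorem FEq' (r : ℤ) : ∀ n : ℤ,
    C.F r ⊓ C.WW n ≤ ⨆ pq : ℤ × ℤ, ⨆ _ : r ≤ pq.1, C.I pq.1 pq.2 := by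
  apply int_ind_up C.a
  · intro n hn
    rw [C.WW_bot hn, inf_bot_eq]
    exact bot_le
  · intro n hn ih
    set Y : Submodule ℂ (ℂ ⊗[ℚ] V) := ⨆ p : ℤ, ⨆ _ : r ≤ p, C.I p (n - p) with hYdef
    have hY : C.Abar r n ≤ C.WW (n - 1) ⊔ Y := by
      rw [C.lemGrA n r]
      apply sup_le _ le_sup_left
      apply iSup₂_le
      intro p hp
      rw [C.Hb_eq]
      apply sup_le
      · exact le_sup_of_le_right
          (le_iSup₂ (f := fun p (_ : r ≤ p) => C.I p (n - p)) p hp)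
      · exact le_sup_left
    have hYF : Y ≤ C.F r :=
      iSup₂_le fun p hp => le_trans (C.I_le_F p (n - p)) (C.hF hp)
    have step : C.F r ⊓ C.WW n ≤ (C.F r ⊓ C.WW (n - 1)) ⊔ Y := by
      have h1 : C.F r ⊓ C.WW n ≤ C.F r ⊓ C.Abar r n := by
        apply le_inf inf_le_left
        rw [C.Abar_def]
        exact le_sup_left
      refine le_trans h1 ?_
      refine le_trans (inf_le_inf le_rfl hY) ?_
      rw [modular hYF]
    refine le_trans step (sup_le (ih) ?_)
    exact iSup₂_le fun p hp =>
      le_iSup₂ (f := fun pq (_ : r ≤ pq.1) => C.I pq.1 pq.2) (p, n - p) hp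

/-- The Hodge filtration is the sum of pieces with first index `≥ r`. -/
theorem FEq (r : ℤ) :
    C.F r = ⨆ pq : ℤ × ℤ, ⨆ _ : r ≤ pq.1, C.I pq.1 pq.2 := by
  apply le_antisymm
  · have h1 : C.F r ≤ C.WW C.b := by
      rw [C.WW_top le_rfl]; exact le_top
    exact le_trans (le_inf le_rfl h1) (C.FEq' r C.b)
  · exact iSup₂_le fun pq hpq => le_trans (C.I_le_F pq.1 pq.2) (C.hF hpq)

/-- Independence of the canonical bigraduation. -/
theorem indep : iSupIndep (fun pq : ℤ × ℤ => C.I pq.1 pq.2) := by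
  intro pq
  rw [disjoint_iff]
  show C.I pq.1 pq.2 ⊓ (⨆ pq' : ℤ × ℤ, ⨆ _ : pq' ≠ pq, C.I pq'.1 pq'.2) = ⊥
  apply le_antisymm _ bot_le
  set n := pq.1 + pq.2 with hn
  set Cc : Submodule ℂ (ℂ ⊗[ℚ] V) :=
    ⨆ pq' : ℤ × ℤ, ⨆ _ : n + 1 ≤ pq'.1 + pq'.2, C.I pq'.1 pq'.2 with hCc
  set Dd : Submodule ℂ (ℂ ⊗[ℚ] V) :=
    (⨆ p' : ℤ, ⨆ _ : p' ≠ pq.1, C.I p' (n - p')) ⊔ C.WW (n - 1) with hDd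
  have hbound : (⨆ pq' : ℤ × ℤ, ⨆ _ : pq' ≠ pq, C.I pq'.1 pq'.2) ≤ Cc ⊔ Dd := by
    apply iSup₂_le
    intro pq' hne
    rcases lt_trichotomy (pq'.1 + pq'.2) n with h | h | h
    · exact le_sup_of_le_right (le_sup_of_le_right (C.I_le_WW' (by omega)))
    · have hp : pq'.1 ≠ pq.1 := by
        intro e
        apply hne
        have : pq'.2 = pq.2 := by omega
        exact Prod.ext e this
      have e : pq'.2 = n - pq'.1 := by omega
      rw [e]
      exact le_sup_of_le_right (le_sup_of_le_left
        (le_iSup₂ (f := fun p' (_ : p' ≠ pq.1) => C.I p' (n - p')) pq'.1 hp))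
    · exact le_sup_of_le_left
        (le_iSup₂ (f := fun pq' (_ : n + 1 ≤ pq'.1 + pq'.2) => C.I pq'.1 pq'.2) pq' (by omega))
  refine le_trans (inf_le_inf_left _ hbound) (transfer ?_ ?_ bot_le)
  · -- I pq ⊓ Dd ≤ ⊥
    have hD := C.lemDn pq.1 n
    rw [show n - pq.1 = pq.2 by omega] at hD
    rw [sup_comm] at hD
    exact le_of_eq hD
  · -- (I pq ⊔ Dd) ⊓ Cc ≤ ⊥
    have hJD : C.I pq.1 pq.2 ⊔ Dd ≤ C.WW n := by
      refine sup_le (C.I_le_WW' (by omega)) (sup_le ?_ (C.WW_mono (by omega)))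
      exact iSup₂_le fun p' _ => C.I_le_WW' (by omega)
    have hE := C.lemEn n
    rw [← hE]
    exact le_inf inf_le_right (le_trans inf_le_left hJD)

theorem iSupEq_top : (⨆ pq : ℤ × ℤ, C.I pq.1 pq.2) = ⊤ := by
  apply le_antisymm le_top
  rw [← C.WW_top (le_refl C.b), C.weightEq C.b]
  exact iSup₂_le fun pq _ => le_iSup (fun pq : ℤ × ℤ => C.I pq.1 pq.2) pq

theorem internal : DirectSum.IsInternal (fun pq : ℤ × ℤ => C.I pq.1 pq.2) := by
  rw [DirectSum.isInternal_submodule_iff_iSupIndep_and_iSup_eq_top]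
  exact ⟨C.indep, C.iSupEq_top⟩

theorem U_def (q m : ℤ) :
    C.U q m = ⨆ j : ℕ, (conjSpan V (C.F (q - j)) ⊓ C.WW (m - j)) := rfl

/-- `TU p n = Σ_j F^{p-1-j} ∩ W_{n-2-j}` : the conjugate of `U(p-1, n-2)`. -/
def TU (p n : ℤ) : Submodule ℂ (ℂ ⊗[ℚ] V) :=
  ⨆ j : ℕ, (C.F (p - 1 - j) ⊓ C.WW (n - 2 - j))

theorem TU_def (p n : ℤ) :
    C.TU p n = ⨆ j : ℕ, (C.F (p - 1 - j) ⊓ C.WW (n - 2 - j)) := rfl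

theorem conj_R (p n : ℤ) :
    conjSpan V (C.R p n) = (C.F p ⊓ C.WW n) ⊔ C.TU p n := by
  rw [R_def, conjSpan_sup, conjSpan_inf, conjSpan_conjSpan, conj_WW, U_def,
    conjSpan_iSup, TU_def]
  congr 1
  exact iSup_congr fun j => by rw [conjSpan_inf, conjSpan_conjSpan, conj_WW]

theorem TU_le_WW (p n : ℤ) : C.TU p n ≤ C.WW (n - 1) := by
  rw [TU_def]
  exact iSup_le fun j => le_trans inf_le_right (C.WW_mono (by omega))

/-- Intersections of partial sups of the canonical pieces. -/
theorem I_inf_I (P Q : ℤ × ℤ → Prop) :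
    (⨆ pq : ℤ × ℤ, ⨆ _ : P pq, C.I pq.1 pq.2) ⊓ (⨆ pq : ℤ × ℤ, ⨆ _ : Q pq, C.I pq.1 pq.2)
      = ⨆ pq : ℤ × ℤ, ⨆ _ : P pq ∧ Q pq, C.I pq.1 pq.2 := by
  have h := isInternal_biSup_inf_biSup C.internal {pq | P pq} {pq | Q pq}
  simpa only [Set.mem_setOf_eq, Set.mem_inter_iff] using h

theorem F_inf_WW_eq (s m : ℤ) :
    C.F s ⊓ C.WW m
      = ⨆ pq : ℤ × ℤ, ⨆ _ : s ≤ pq.1 ∧ pq.1 + pq.2 ≤ m, C.I pq.1 pq.2 := by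
  rw [C.FEq s, C.weightEq m, C.I_inf_I]

/-- The main conjugation congruence, by strong induction on the weight. -/
theorem conjC1 : ∀ n : ℤ, ∀ p q : ℤ, p + q = n →
    conjSpan V (C.I q p) ≤ C.I p q ⊔
      ⨆ pq' : ℤ × ℤ, ⨆ _ : pq'.1 < p ∧ pq'.2 < q, C.I pq'.1 pq'.2 := by
  apply int_strong_ind_up C.a
  · intro n hn p q hpq
    have hb : C.I q p = ⊥ := C.I_bot_lowweight (by omega)
    rw [hb, conjSpan_bot]
    exact bot_le
  · intro n hn ih p q hpq
    -- Helper: description of `σF^s ∩ W_m` for `m < n`.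
    have hH : ∀ m, m ≤ n - 1 → ∀ s,
        conjSpan V (C.F s) ⊓ C.WW m ≤
          ⨆ pq' : ℤ × ℤ,
            ⨆ _ : pq'.1 + pq'.2 ≤ m ∧ (s ≤ pq'.2 ∨ pq'.1 ≤ m - s - 1),
              C.I pq'.1 pq'.2 := by
      intro m hm s
      have e0 : conjSpan V (C.F s) ⊓ C.WW m = conjSpan V (C.F s ⊓ C.WW m) := by
        rw [conjSpan_inf, conj_WW]
      rw [e0, C.F_inf_WW_eq s m, conjSpan_iSup]
      apply iSup_le
      intro pq'
      rw [conjSpan_iSup]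
      apply iSup_le
      intro hpq'
      obtain ⟨h1, h2⟩ := hpq'
      have hih := ih (pq'.1 + pq'.2) (by omega) pq'.2 pq'.1 (by ring)
      refine le_trans hih (sup_le ?_ ?_)
      · exact le_iSup₂ (f := fun pq'' (_ : pq''.1 + pq''.2 ≤ m ∧ (s ≤ pq''.2 ∨ pq''.1 ≤ m - s - 1)) => C.I pq''.1 pq''.2)
          (pq'.2, pq'.1) (by constructor <;> [omega; exact Or.inl (by omega)])
      · apply iSup₂_le
        intro pq'' hpq''
        exact le_iSup₂ (f := fun pq'' (_ : pq''.1 + pq''.2 ≤ m ∧ (s ≤ pq''.2 ∨ pq''.1 ≤ m - s - 1)) => C.I pq''.1 pq''.2)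
          pq'' (by constructor <;> [omega; exact Or.inr (by omega)])
    -- basic inequalities
    have hIA : C.I q p ≤ C.Abar q n := by
      have h := C.I_le_Abar q p
      rwa [show q + p = n by omega] at h
    have hIB : C.I q p ≤ C.Bbar p n := by
      have h := C.I_le_Bbar q p
      rwa [show q + p = n by omega] at h
    have hIpqFW : C.I p q ≤ C.F p ⊓ C.WW n := by
      rw [C.I_def]
      have : C.WW (p + q) = C.WW n := by rw [hpq]
      rw [this] at *
      exact inf_le_left
    have hIpqR : C.I p q ≤ C.R q n := by
      have h := C.I_le_R p q
      rwa [hpq] at h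
    -- step 1 : σ(I^{q,p}) ≤ I^{p,q} + W_{n-1}
    have step1 : conjSpan V (C.I q p) ≤ C.I p q ⊔ C.WW (n - 1) := by
      have h1 : conjSpan V (C.I q p) ≤ conjSpan V (C.Abar q n) ⊓ conjSpan V (C.Bbar p n) :=
        le_inf (conjSpan_mono hIA) (conjSpan_mono hIB)
      rw [C.conj_Abar, C.conj_Bbar] at h1
      have h2 : C.Abar p n ⊓ C.Bbar q n = C.I p q ⊔ C.WW (n - 1) := by
        have h := C.claim1 p q
        rwa [hpq] at h
      rw [← h2]
      exact le_trans h1 (le_inf inf_le_right inf_le_left)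
    -- step 2 : σ(I^{q,p}) ≤ σF^q ∩ W_n ≤ R^{q,n}
    have step2 : conjSpan V (C.I q p) ≤ C.R q n := by
      have h1 : C.I q p ≤ C.F q ⊓ C.WW n := by
        refine le_inf (C.I_le_F q p) ?_
        have h := C.I_le_WW q p
        rwa [show q + p = n by omega] at h
      have h2 : conjSpan V (C.I q p) ≤ conjSpan V (C.F q) ⊓ C.WW n := by
        refine le_trans (conjSpan_mono h1) ?_
        rw [conjSpan_inf, conj_WW]
      rw [C.R_def]
      exact le_trans h2 le_sup_left
    -- step 3 : σ(I^{q,p}) ≤ (F^p ∩ W_n) + TU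
    have step3 : conjSpan V (C.I q p) ≤ (C.F p ⊓ C.WW n) ⊔ C.TU p n := by
      have h1 : C.I q p ≤ C.R p n := by
        have h := C.I_le_R q p
        rwa [show q + p = n by omega] at h
      refine le_trans (conjSpan_mono h1) ?_
      rw [C.conj_R]
    -- combine
    set X : Submodule ℂ (ℂ ⊗[ℚ] V) := ((C.F p ⊓ C.WW n) ⊔ C.TU p n) ⊓ C.U q (n - 1)
      with hX
    have comb : conjSpan V (C.I q p) ≤ C.I p q ⊔ X := by
      have e1 : C.R q n ⊓ (C.I p q ⊔ C.WW (n - 1)) = C.I p q ⊔ C.U q (n - 1) := by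
        rw [sup_comm (C.I p q), modular hIpqR, C.R_inf_WW, sup_comm]
      have c1 : conjSpan V (C.I q p) ≤ C.I p q ⊔ C.U q (n - 1) := by
        rw [← e1]
        exact le_inf step2 step1
      have e2 : ((C.F p ⊓ C.WW n) ⊔ C.TU p n) ⊓ (C.I p q ⊔ C.U q (n - 1))
          = C.I p q ⊔ X := by
        rw [sup_comm (C.I p q), modular (le_trans hIpqFW le_sup_left), sup_comm]
      rw [← e2]
      exact le_inf step3 c1
    -- the error term `X` consists of strictly lower pieces
    have hTUb : C.TU p n ≤ C.WW (n - 1) := C.TU_le_WW p n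
    have hXlow : X ≤ ⨆ pq' : ℤ × ℤ, ⨆ _ : pq'.1 < p ∧ pq'.2 < q, C.I pq'.1 pq'.2 := by
      have hXW : X ≤ C.WW (n - 1) := le_trans inf_le_right (C.U_le_WW q (n - 1))
      have e3 : C.WW (n - 1) ⊓ ((C.F p ⊓ C.WW n) ⊔ C.TU p n)
          = (C.WW (n - 1) ⊓ (C.F p ⊓ C.WW n)) ⊔ C.TU p n := modular hTUb
      have e4 : C.WW (n - 1) ⊓ (C.F p ⊓ C.WW n) ≤ C.F p ⊓ C.WW (n - 1) :=
        le_inf (le_trans inf_le_right inf_le_left) inf_le_left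
      have hX1 : X ≤ ((C.F p ⊓ C.WW (n - 1)) ⊔ C.TU p n) ⊓ C.U q (n - 1) := by
        refine le_inf ?_ inf_le_right
        refine le_trans (le_inf hXW inf_le_left) ?_
        rw [e3]
        exact sup_le (le_sup_of_le_left e4) le_sup_right
      set SF : ℤ × ℤ → Prop := fun pq' =>
        (p ≤ pq'.1 ∧ pq'.1 + pq'.2 ≤ n - 1) ∨
          ∃ j : ℕ, p - 1 - (j : ℤ) ≤ pq'.1 ∧ pq'.1 + pq'.2 ≤ n - 2 - (j : ℤ) with hSFdef
      set SU : ℤ × ℤ → Prop := fun pq' =>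
        pq'.1 + pq'.2 ≤ n - 1 ∧ pq'.1 ≤ p - 1 with hSUdef
      have hSF : (C.F p ⊓ C.WW (n - 1)) ⊔ C.TU p n
          ≤ ⨆ pq' : ℤ × ℤ, ⨆ _ : SF pq', C.I pq'.1 pq'.2 := by
        apply sup_le
        · rw [C.F_inf_WW_eq p (n - 1)]
          exact iSupP_mono fun pq' h => Or.inl h
        · rw [C.TU_def]
          apply iSup_le
          intro j
          rw [C.F_inf_WW_eq (p - 1 - j) (n - 2 - j)]
          exact iSupP_mono fun pq' h => Or.inr ⟨j, h.1, h.2⟩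
      have hSU : C.U q (n - 1)
          ≤ ⨆ pq' : ℤ × ℤ, ⨆ _ : SU pq', C.I pq'.1 pq'.2 := by
        rw [C.U_def]
        apply iSup_le
        intro j
        refine le_trans (hH (n - 1 - j) (by omega) (q - j)) ?_
        refine iSupP_mono fun pq' h => ?_
        obtain ⟨h1, h2⟩ := h
        refine ⟨by omega, ?_⟩
        rcases h2 with h2 | h2 <;> omega
      refine le_trans (le_trans hX1 (inf_le_inf hSF hSU)) ?_
      rw [C.I_inf_I]
      refine iSupP_mono fun pq' h => ?_
      obtain ⟨hsf, hw, hp1⟩ := h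
      rcases hsf with ⟨ha1, _⟩ | ⟨j, hj1, hj2⟩
      · omega
      · constructor <;> omega
    exact le_trans comb (sup_le le_sup_left (le_sup_of_le_right hXlow))

/-- The conjugation condition for the canonical bigraduation. -/
theorem conjEq (p q : ℤ) :
    C.I p q ⊔ (⨆ pq' : ℤ × ℤ, ⨆ _ : pq'.1 < p ∧ pq'.2 < q, C.I pq'.1 pq'.2)
      = conjSpan V (C.I q p) ⊔
        (⨆ pq' : ℤ × ℤ, ⨆ _ : pq'.1 < p ∧ pq'.2 < q, C.I pq'.1 pq'.2) := by
  have hLconj : conjSpan V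
      (⨆ pq' : ℤ × ℤ, ⨆ _ : pq'.1 < q ∧ pq'.2 < p, C.I pq'.1 pq'.2) ≤
      ⨆ pq' : ℤ × ℤ, ⨆ _ : pq'.1 < p ∧ pq'.2 < q, C.I pq'.1 pq'.2 := by
    rw [conjSpan_iSup]
    apply iSup_le
    intro pq'
    rw [conjSpan_iSup]
    apply iSup_le
    intro hpq'
    refine le_trans (C.conjC1 (pq'.1 + pq'.2) pq'.2 pq'.1 (by ring)) ?_
    apply sup_le
    · exact le_iSup₂ (f := fun (pq'' : ℤ × ℤ) (_ : pq''.1 < p ∧ pq''.2 < q) => C.I pq''.1 pq''.2)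
        (pq'.2, pq'.1) ⟨hpq'.2, hpq'.1⟩
    · exact iSupP_mono fun pq'' h => ⟨by omega, by omega⟩
  apply le_antisymm
  · apply sup_le _ le_sup_right
    have h1 : C.I p q = conjSpan V (conjSpan V (C.I p q)) := (conjSpan_conjSpan _).symm
    rw [h1]
    refine le_trans (conjSpan_mono (C.conjC1 (q + p) q p rfl)) ?_
    rw [conjSpan_sup]
    exact sup_le le_sup_left (le_sup_of_le_right hLconj)
  · apply sup_le _ le_sup_right
    exact C.conjC1 (p + q) p q rfl

/-- Any bigraduation satisfying the conjugation condition equals the canonical one. -/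
theorem unique_piece (J : ℤ × ℤ → Submodule ℂ (ℂ ⊗[ℚ] V))
    (hJW : ∀ k : ℤ, C.WW k = ⨆ pq : ℤ × ℤ, ⨆ _ : pq.1 + pq.2 ≤ k, J pq)
    (hJF : ∀ r : ℤ, C.F r = ⨆ pq : ℤ × ℤ, ⨆ _ : r ≤ pq.1, J pq)
    (hJconj : ∀ p q : ℤ,
      conjSpan V (J (q, p)) ⊔ (⨆ pq' : ℤ × ℤ, ⨆ _ : pq'.1 < p ∧ pq'.2 < q, J pq')
        = J (p, q) ⊔ (⨆ pq' : ℤ × ℤ, ⨆ _ : pq'.1 < p ∧ pq'.2 < q, J pq')) :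
    ∀ pq : ℤ × ℤ, J pq = C.I pq.1 pq.2 := by
  have u1 : ∀ pq : ℤ × ℤ, J pq ≤ C.WW (pq.1 + pq.2) := by
    intro pq
    rw [hJW]
    exact le_iSup₂ (f := fun pq' (_ : pq'.1 + pq'.2 ≤ pq.1 + pq.2) => J pq') pq le_rfl
  have u2 : ∀ pq : ℤ × ℤ, J pq ≤ C.F pq.1 := by
    intro pq
    rw [hJF]
    exact le_iSup₂ (f := fun pq' (_ : pq.1 ≤ pq'.1) => J pq') pq le_rfl
  have u3 : ∀ p q : ℤ, J (p, q) ≤ conjSpan V (J (q, p)) ⊔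
      (⨆ pq' : ℤ × ℤ, ⨆ _ : pq'.1 < p ∧ pq'.2 < q, J pq') := by
    intro p q
    rw [hJconj]
    exact le_sup_left
  have uconj : ∀ p q : ℤ, conjSpan V (J (q, p)) ≤ conjSpan V (C.F q) ⊓ C.WW (p + q) := by
    intro p q
    have h1 : J (q, p) ≤ C.F q ⊓ C.WW (p + q) := by
      refine le_inf (u2 (q, p)) ?_
      have := u1 (q, p)
      simpa [show q + p = p + q by ring] using this
    refine le_trans (conjSpan_mono h1) ?_
    rw [conjSpan_inf, conj_WW]
  have uQ : ∀ n : ℤ, ∀ pq : ℤ × ℤ, pq.1 + pq.2 = n → J pq ≤ C.U pq.2 n := by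
    apply int_strong_ind_up C.a
    · intro n hn pq hpq
      have := u1 pq
      rw [hpq, C.WW_bot hn, le_bot_iff] at this
      rw [this]
      exact bot_le
    · intro n hn ih pq hpq
      have hsplit : J pq = J (pq.1, pq.2) := by rw [Prod.mk.eta]
      rw [hsplit]
      refine le_trans (u3 pq.1 pq.2) (sup_le ?_ ?_)
      · refine le_trans (uconj pq.1 pq.2) ?_
        rw [show pq.1 + pq.2 = n from hpq]
        exact C.term_le_U
      · apply iSup₂_le
        intro pq' hpq'
        refine le_trans (ih (pq'.1 + pq'.2) (by omega) pq' rfl) ?_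
        exact C.U_le_U (by omega) (by omega)
  have u4 : ∀ pq : ℤ × ℤ, J pq ≤ C.I pq.1 pq.2 := by
    intro pq
    rw [C.I_def]
    refine le_inf (le_inf (u2 pq) (u1 pq)) ?_
    have hsplit : J pq = J (pq.1, pq.2) := by rw [Prod.mk.eta]
    rw [hsplit]
    refine le_trans (u3 pq.1 pq.2) (sup_le ?_ ?_)
    · rw [C.R_def]
      exact le_sup_of_le_left (uconj pq.1 pq.2)
    · rw [C.R_def]
      apply iSup₂_le
      intro pq' hpq'
      refine le_sup_of_le_right ?_
      refine le_trans (uQ (pq'.1 + pq'.2) pq' rfl) ?_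
      exact C.U_le_U (by omega) (by omega)
  have hJsup : (⨆ pq' : ℤ × ℤ, J pq') = ⊤ := by
    apply le_antisymm le_top
    rw [← C.WW_top (le_refl C.b), hJW C.b]
    exact iSup₂_le fun pq' _ => le_iSup J pq'
  intro pq
  apply le_antisymm (u4 pq)
  have htop : C.I pq.1 pq.2 ≤ J pq ⊔ ⨆ pq' : ℤ × ℤ, ⨆ _ : pq' ≠ pq, J pq' := by
    refine le_trans le_top ?_
    rw [← hJsup]
    apply iSup_le
    intro pq'
    rcases eq_or_ne pq' pq with h | h
    · subst h; exact le_sup_left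
    · exact le_sup_of_le_right (le_iSup₂ (f := fun pq'' (_ : pq'' ≠ pq) => J pq'') pq' h)
  have hdisj : C.I pq.1 pq.2 ⊓ (⨆ pq' : ℤ × ℤ, ⨆ _ : pq' ≠ pq, J pq') = ⊥ := by
    apply le_antisymm _ bot_le
    have h1 : (⨆ pq' : ℤ × ℤ, ⨆ _ : pq' ≠ pq, J pq')
        ≤ ⨆ pq' : ℤ × ℤ, ⨆ _ : pq' ≠ pq, C.I pq'.1 pq'.2 :=
      iSup₂_le fun pq' h =>
        le_trans (u4 pq') (le_iSup₂ (f := fun pq'' (_ : pq'' ≠ pq) => C.I pq''.1 pq''.2) pq' h)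
    refine le_trans (inf_le_inf_left _ h1) ?_
    have := C.indep pq
    rw [disjoint_iff] at this
    exact le_of_eq this
  have e1 : C.I pq.1 pq.2 = C.I pq.1 pq.2 ⊓
      (J pq ⊔ ⨆ pq' : ℤ × ℤ, ⨆ _ : pq' ≠ pq, J pq') := (inf_eq_left.mpr htop).symm
  rw [e1, sup_comm (J pq), modular (u4 pq), hdisj, bot_sup_eq]

end Ctx

end Main

end MHS

/-- existence and uniqueness of Deligne's canonical bigraduation of a
mixed `ℚ`-Hodge structure. -/
theorem existsUnique_deligne_bigraduation [FiniteDimensional ℚ V]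
    (W : ℤ → Submodule ℚ V) (F : ℤ → Submodule ℂ (ℂ ⊗[ℚ] V))
    (h : IsMixedHodgeStructure V W F) :
    ∃! I : ℤ × ℤ → Submodule ℂ (ℂ ⊗[ℚ] V),
      IsBigraduation V W F I ∧ ConjugationCondition V I := by
  classical
  obtain ⟨a, ha⟩ := h.W_eventually_bot
  obtain ⟨b, hb⟩ := h.W_eventually_top
  obtain ⟨c, hc⟩ := h.F_eventually_top
  obtain ⟨d, hd⟩ := h.F_eventually_bot
  set C : MHS.Ctx V :=
    { W := W, F := F, hW := h.mono_W, hF := h.anti_F,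
      a := a, ha := ha, b := b, hb := hb, d := d, hd := hd, c := c, hc := hc,
      hS := by
        intro n p
        have hgs := h.graded_sup n p
        rwa [MHS.conjSpan_inf, MHS.conjSpan_WC] at hgs
      hI := by
        intro n p
        have hgi := h.graded_inf n p
        rwa [MHS.conjSpan_inf, MHS.conjSpan_WC] at hgi } with hC
  refine ⟨fun pq => C.I pq.1 pq.2, ⟨⟨?_, ?_, ?_, ?_⟩, ?_⟩, ?_⟩
  · exact C.I_supp_finite
  · exact C.internal
  · exact fun k => C.weightEq k
  · exact fun r => C.FEq r
  · exact fun p q => C.conjEq p q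
  · rintro I' ⟨hbig, hconj⟩
    funext pq
    exact C.unique_piece I' (fun k => hbig.weight k) (fun r => hbig.hodge r)
      (fun p q => (hconj p q).symm) pq

end
end

section
/- Let V be a finite-dimensional ℚ-vector space carrying a mixed ℚ-Hodge structure (W_•, F^•) and let (I^{p,q}) be a bigraduation of (V, W_•, F^•). Then every v ∈ V with 1⊗v ∈ I^{0,0} satisfies v ∈ W₀ and 1⊗v ∈ F⁰. If moreover (I^{p,q}) satisfies the conjugation condition, then the converse also holds, so that {v ∈ V : 1⊗v ∈ I^{0,0}} = {v ∈ W₀ : 1⊗v ∈ F⁰}. -/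
open scoped TensorProduct

noncomputable section

variable (V : Type) [AddCommGroup V] [Module ℚ V]

section AuxInternal

variable {R : Type*} [CommRing R] {M : Type*} [AddCommGroup M] [Module R M]
variable {ι : Type*} [DecidableEq ι] {I : ι → Submodule R M}

lemma aux_symm_apply_eq_zero (h : DirectSum.IsInternal I) {S : Set ι} {x : M}
    (hx : x ∈ ⨆ i ∈ S, I i) {j : ι} (hj : j ∉ S) :
    (LinearEquiv.ofBijective (DirectSum.coeLinearMap I) h).symm x j = 0 := by
  rw [iSup_subtype'] at hx
  refine Submodule.iSup_induction (motive := fun y =>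
      (LinearEquiv.ofBijective (DirectSum.coeLinearMap I) h).symm y j = 0) _ hx ?_ ?_ ?_
  · rintro ⟨i, hiS⟩ y hy
    have hne : i ≠ j := by rintro rfl; exact hj hiS
    exact h.ofBijective_coeLinearMap_of_mem_ne hne hy
  · simp
  · intro a b ha hb
    simp [ha, hb]

lemma aux_mem_biSup (h : DirectSum.IsInternal I) {S : Set ι} {x : M}
    (hx : ∀ j ∉ S, (LinearEquiv.ofBijective (DirectSum.coeLinearMap I) h).symm x j = 0) :
    x ∈ ⨆ i ∈ S, I i := by
  classical
  set e := LinearEquiv.ofBijective (DirectSum.coeLinearMap I) h with he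
  have hxe : x = e (e.symm x) := (e.apply_symm_apply x).symm
  rw [hxe, ← DirectSum.sum_support_of (e.symm x)]
  rw [map_sum]
  refine Submodule.sum_mem _ ?_
  intro i hi
  have hiS : i ∈ S := by
    by_contra hiS
    exact (DFinsupp.mem_support_iff.mp hi) (hx i hiS)
  have hval : e (DirectSum.of (fun i => I i) i ((e.symm x) i)) = ((e.symm x) i : M) := by
    exact DirectSum.coeLinearMap_of (A := I) i _
  rw [hval]
  exact Submodule.mem_iSup_of_mem i (Submodule.mem_iSup_of_mem hiS ((e.symm x) i).2)

lemma aux_biSup_inf_biSup (h : DirectSum.IsInternal I) (S T : Set ι) :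
    (⨆ i ∈ S, I i) ⊓ (⨆ i ∈ T, I i) ≤ ⨆ i ∈ S ∩ T, I i := by
  rintro x ⟨hxS, hxT⟩
  refine aux_mem_biSup h ?_
  intro j hj
  rcases Classical.em (j ∈ S) with hS | hS
  · exact aux_symm_apply_eq_zero h hxT (fun hT => hj ⟨hS, hT⟩)
  · exact aux_symm_apply_eq_zero h hxS hS

end AuxInternal

section AuxTensor

variable (V : Type) [AddCommGroup V] [Module ℚ V]

lemma sigmaV_one_tmul (v : V) : sigmaV V ((1:ℂ) ⊗ₜ[ℚ] v) = (1:ℂ) ⊗ₜ[ℚ] v := by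
  simp [sigmaV, conjQ, TensorProduct.map_tmul]

lemma mem_W_of_one_tmul_mem_WC (W : ℤ → Submodule ℚ V) (k : ℤ) (v : V)
    (hv : (1:ℂ) ⊗ₜ[ℚ] v ∈ WC V W k) : v ∈ W k := by
  by_contra hvW
  have hq : (W k).mkQ v ≠ 0 := by
    simpa [Submodule.Quotient.mk_eq_zero] using hvW
  obtain ⟨φ, hφ⟩ : ∃ φ : Module.Dual ℚ (V ⧸ W k), φ ((W k).mkQ v) ≠ 0 := by
    by_contra hall
    push_neg at hall
    exact hq ((Module.forall_dual_apply_eq_zero_iff ℚ _).mp hall)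
  set f : V →ₗ[ℚ] ℚ := φ ∘ₗ (W k).mkQ with hf
  set Φ : ℂ ⊗[ℚ] V →ₗ[ℂ] ℂ :=
    (Algebra.TensorProduct.rid ℚ ℂ ℂ).toLinearMap ∘ₗ LinearMap.baseChange ℂ f with hΦdef
  have hΦ : ∀ w : V, Φ ((1:ℂ) ⊗ₜ[ℚ] w) = (f w : ℚ) • (1:ℂ) := by
    intro w
    simp [hΦdef, Algebra.TensorProduct.rid_tmul]
  have hker : WC V W k ≤ LinearMap.ker Φ := by
    rw [WC, Submodule.span_le]
    rintro _ ⟨w, hw, rfl⟩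
    have hw0 : f w = 0 := by
      simp [hf, (Submodule.Quotient.mk_eq_zero _).mpr hw]
    simp [LinearMap.mem_ker, hΦ w, hw0]
  have h0 : Φ ((1:ℂ) ⊗ₜ[ℚ] v) = 0 := hker hv
  rw [hΦ v, Rat.smul_def, mul_one] at h0
  exact hφ (by exact_mod_cast h0)

end AuxTensor

/-- for any bigraduation, rational vectors in `I^{0,0}` lie in
`W₀ ∩ F⁰`; if the bigraduation satisfies the conjugation condition, the converse
holds as well, i.e. `{v ∈ V : 1⊗v ∈ I^{0,0}} = {v ∈ W₀ : 1⊗v ∈ F⁰}`. -/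
theorem rational_vectors_of_bigraduation [FiniteDimensional ℚ V]
    (W : ℤ → Submodule ℚ V) (F : ℤ → Submodule ℂ (ℂ ⊗[ℚ] V))
    (h : IsMixedHodgeStructure V W F)
    (I : ℤ × ℤ → Submodule ℂ (ℂ ⊗[ℚ] V)) (hI : IsBigraduation V W F I) :
    (∀ v : V, (1 : ℂ) ⊗ₜ[ℚ] v ∈ I (0, 0) → v ∈ W 0 ∧ (1 : ℂ) ⊗ₜ[ℚ] v ∈ F 0) ∧
    (ConjugationCondition V I →
      ∀ v : V, (1 : ℂ) ⊗ₜ[ℚ] v ∈ I (0, 0) ↔ v ∈ W 0 ∧ (1 : ℂ) ⊗ₜ[ℚ] v ∈ F 0) := by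
  classical
  have forward : ∀ v : V, (1 : ℂ) ⊗ₜ[ℚ] v ∈ I (0, 0) →
      v ∈ W 0 ∧ (1 : ℂ) ⊗ₜ[ℚ] v ∈ F 0 := by
    intro v hv
    constructor
    · apply mem_W_of_one_tmul_mem_WC V W 0
      rw [hI.weight 0]
      exact Submodule.mem_iSup_of_mem (0, 0) (Submodule.mem_iSup_of_mem (by simp) hv)
    · rw [hI.hodge 0]
      exact Submodule.mem_iSup_of_mem (0, 0) (Submodule.mem_iSup_of_mem (by simp) hv)
  refine ⟨forward, ?_⟩
  intro hc v
  refine ⟨forward v, ?_⟩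
  rintro ⟨hvW, hvF⟩
  set x := (1 : ℂ) ⊗ₜ[ℚ] v with hxdef
  set S1 : Set (ℤ × ℤ) := {pq | 0 ≤ pq.1} with hS1
  set S2 : Set (ℤ × ℤ) := {pq | pq.1 + pq.2 ≤ 0} with hS2
  set U : Set (ℤ × ℤ) := {((0 : ℤ), (0 : ℤ))} ∪ {pq | pq.1 < 0} with hU
  have hx1 : x ∈ ⨆ pq ∈ S1, I pq := by
    rw [← hI.hodge 0]; exact hvF
  have hx2 : x ∈ ⨆ pq ∈ S2, I pq := by
    rw [← hI.weight 0]
    exact Submodule.subset_span ⟨v, hvW, rfl⟩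
  have hx12 : x ∈ ⨆ pq ∈ S1 ∩ S2, I pq :=
    aux_biSup_inf_biSup hI.internal S1 S2 ⟨hx1, hx2⟩
  -- the conjugate of anything in ⨆_{S1∩S2} I lands in ⨆_U I
  have hsigma : sigmaV V x ∈ ⨆ pq ∈ U, I pq := by
    rw [iSup_subtype'] at hx12
    refine Submodule.iSup_induction
      (motive := fun y => sigmaV V y ∈ ⨆ pq ∈ U, I pq) _ hx12 ?_ ?_ ?_
    · rintro ⟨⟨p, q⟩, hp, hpq⟩ y hy
      simp only [hS1, Set.mem_setOf_eq] at hp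
      simp only [hS2, Set.mem_setOf_eq] at hpq
      have hmem : sigmaV V y ∈ conjSpan V (I (p, q)) :=
        Submodule.subset_span ⟨y, hy, rfl⟩
      have hle : conjSpan V (I (p, q)) ≤ I (q, p) ⊔ lowerPieces V I q p := by
        calc conjSpan V (I (p, q)) ≤ conjSpan V (I (p, q)) ⊔ lowerPieces V I q p :=
              le_sup_left
          _ = I (q, p) ⊔ lowerPieces V I q p := (hc q p).symm
      have hlow : lowerPieces V I q p ≤ ⨆ pq ∈ U, I pq := by
        rw [lowerPieces]
        refine biSup_mono ?_
        rintro ⟨r, s⟩ ⟨hr, hs⟩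
        refine Or.inr ?_
        simp only [Set.mem_setOf_eq] at hr hs ⊢
        omega
      have htop : I (q, p) ≤ ⨆ pq ∈ U, I pq := by
        rcases Classical.em (p = 0 ∧ q = 0) with h00 | h00
        · obtain ⟨rfl, rfl⟩ := h00
          exact le_iSup₂ (f := fun pq (_ : pq ∈ U) => I pq) ((0 : ℤ), (0 : ℤ))
            (Or.inl rfl)
        · have hq0 : q < 0 := by omega
          exact le_iSup₂ (f := fun pq (_ : pq ∈ U) => I pq) (q, p) (Or.inr hq0)
      exact (sup_le htop hlow) (hle hmem)
    · simp only [map_zero]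
      exact Submodule.zero_mem _
    · intro a b ha hb
      rw [map_add]
      exact Submodule.add_mem _ ha hb
  have hxU : x ∈ ⨆ pq ∈ U, I pq := by
    rwa [hxdef, sigmaV_one_tmul] at hsigma
  have hfinal : x ∈ ⨆ pq ∈ U ∩ S1, I pq :=
    aux_biSup_inf_biSup hI.internal U S1 ⟨hxU, hx1⟩
  have hUS : U ∩ S1 = {((0 : ℤ), (0 : ℤ))} := by
    ext ⟨p, q⟩
    simp only [hU, hS1, Set.mem_inter_iff, Set.mem_union, Set.mem_singleton_iff,
      Set.mem_setOf_eq, Prod.mk.injEq]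
    omega
  rw [hUS] at hfinal
  simpa using hfinal
end
end

section
/- Let l ∈ ℤ, let a ∈ ℂ with a ≠ 0, let r > 0, and let f : ℂ → ℂ be analytic on a neighbourhood of the closed disc {z ∈ ℂ : |z| ≤ r}, with f(0) = 0 and a + f(z) ≠ 0 for every z with |z| ≤ r. Define q(z) := z^l·(a + f(z)) for z ≠ 0, where z^l denotes the integer (zpow) power. Then the circle integral over the positively oriented circle of radius r centred at 0 satisfies ∮_{|z|=r} q′(z)/q(z) dz = 2πi·l; in other words, the winding number around 0 of the loop t ↦ q(r·e^{2πit}) equals l. -/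
open Metric

/-- for `q(z) = z^l (a + f(z))` with `a ≠ 0`, `f` analytic on a
neighbourhood of the closed disc of radius `r > 0`, `f(0) = 0` and `a + f` nonvanishing
on that disc, the integral of the logarithmic derivative `q'/q` over the circle of
radius `r` centred at `0` equals `2πi·l`. -/
theorem circleIntegral_logDeriv_eq (l : ℤ) (a : ℂ) (ha : a ≠ 0) (r : ℝ) (hr : 0 < r)
    (f : ℂ → ℂ)
    (hf : ∀ z ∈ closedBall (0 : ℂ) r, AnalyticAt ℂ f z)
    (hf0 : f 0 = 0)
    (hne : ∀ z ∈ closedBall (0 : ℂ) r, a + f z ≠ 0) :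
    (∮ z in C(0, r), deriv (fun w : ℂ => w ^ l * (a + f w)) z / (z ^ l * (a + f z)))
      = 2 * Real.pi * Complex.I * (l : ℂ) := by
  have hz0on : ∀ z ∈ sphere (0 : ℂ) r, z ≠ 0 := by
    intro z hz h
    rw [mem_sphere_iff_norm, h] at hz
    simp at hz
    exact hr.ne' hz.symm
  have hsub : Set.EqOn
      (fun z : ℂ => deriv (fun w : ℂ => w ^ l * (a + f w)) z / (z ^ l * (a + f z)))
      (fun z : ℂ => (l : ℂ) * z⁻¹ + deriv f z / (a + f z)) (sphere (0 : ℂ) r) := by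
    intro z hz
    have hzc : z ∈ closedBall (0 : ℂ) r := sphere_subset_closedBall hz
    have hz0 : z ≠ 0 := hz0on z hz
    have h1 : DifferentiableAt ℂ (fun w : ℂ => w ^ l) z :=
      differentiableAt_zpow.mpr (Or.inl hz0)
    have h2 : DifferentiableAt ℂ (fun w : ℂ => a + f w) z :=
      (differentiableAt_const a).add (hf z hzc).differentiableAt
    have hd : deriv (fun w : ℂ => w ^ l * (a + f w)) z
        = (l : ℂ) * z ^ (l - 1) * (a + f z) + z ^ l * deriv f z := by
      rw [deriv_fun_mul h1 h2, deriv_zpow, deriv_const_add]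
    have hzl : z ^ l ≠ 0 := zpow_ne_zero _ hz0
    have haf : a + f z ≠ 0 := hne z hzc
    simp only [hd, zpow_sub_one₀ hz0]
    field_simp
  rw [circleIntegral.integral_congr hr.le hsub]
  have hi1 : CircleIntegrable (fun z : ℂ => (l : ℂ) * z⁻¹) 0 r := by
    apply ContinuousOn.circleIntegrable hr.le
    exact continuousOn_const.mul (continuousOn_id.inv₀ hz0on)
  have hdg : ∀ z ∈ closedBall (0 : ℂ) r,
      DifferentiableAt ℂ (fun w : ℂ => deriv f w / (a + f w)) z := by
    intro z hz
    have hderiv : AnalyticAt ℂ (deriv f) z := (AnalyticOnNhd.deriv hf) z hz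
    exact (hderiv.differentiableAt).div
      ((differentiableAt_const a).add (hf z hz).differentiableAt) (hne z hz)
  have hi2 : CircleIntegrable (fun z : ℂ => deriv f z / (a + f z)) 0 r := by
    apply ContinuousOn.circleIntegrable hr.le
    exact fun z hz => ((hdg z (sphere_subset_closedBall hz)).continuousAt).continuousWithinAt
  have hsplit : (fun z : ℂ => (l : ℂ) * z⁻¹ + deriv f z / (a + f z))
      = fun z : ℂ => (l : ℂ) * z⁻¹
          - (-(fun w : ℂ => deriv f w / (a + f w))) z := by
    funext z; simp
  rw [hsplit, circleIntegral.integral_sub hi1 hi2.neg]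
  have hnegval : (∮ z in C(0, r), (-(fun w : ℂ => deriv f w / (a + f w))) z)
      = (-1 : ℂ) * ∮ z in C(0, r), deriv f z / (a + f z) := by
    rw [← circleIntegral.integral_const_mul]
    congr 1; funext z; simp
  have h2zero : (∮ z in C(0, r), deriv f z / (a + f z)) = 0 := by
    exact Complex.circleIntegral_eq_zero_of_differentiable_on_off_countable hr.le
      Set.countable_empty
      (fun z hz => (hdg z hz).continuousAt.continuousWithinAt)
      (fun z hz => hdg z (ball_subset_closedBall hz.1))
  have h1val : (∮ z in C(0, r), (l : ℂ) * z⁻¹) = (l : ℂ) * (2 * Real.pi * Complex.I) := by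
    have : (∮ z in C(0, r), (l : ℂ) * z⁻¹) = (l : ℂ) • (∮ z in C(0, r), z⁻¹) := by
      simp_rw [← smul_eq_mul]
      exact circleIntegral.integral_smul (l : ℂ) _ 0 r
    rw [this]
    have := circleIntegral.integral_sub_inv_of_mem_ball (mem_ball_self hr (x := (0 : ℂ)))
    simp only [sub_zero] at this
    rw [this, smul_eq_mul]
  rw [hnegval, h2zero, h1val]
  ring
end

section
/- For every pair of integers (a, b) ≠ (0, 0) and all roots of unity ζ₁, ζ₂, the curve C is not contained in the torsion translate {(ζ₁·x^a, ζ₂·x^b) : x ∈ ℂ^×}: there exists a point (x₁, x₂) ∈ C such that for no x ∈ ℂ^× does one have both x₁ = ζ₁·x^a and x₂ = ζ₂·x^b. -/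
/-- `ζ` is a root of unity in `ℂ`. -/
def IsRootOfUnity (ζ : ℂ) : Prop := ∃ n : ℕ, 0 < n ∧ ζ ^ n = 1

/-- The curve `C = {(x₁, x₂) ∈ ℂ^× × ℂ^× : x₁² = 3·x₂}` inside `ℂ × ℂ`. -/
def curveC : Set (ℂ × ℂ) := {p : ℂ × ℂ | p.1 ≠ 0 ∧ p.2 ≠ 0 ∧ p.1 ^ 2 = 3 * p.2}

lemma aux_zpow_eq_one {r : ℝ} (hr : 0 ≤ r) {a : ℤ} (ha : a ≠ 0) (h : r ^ a = 1) : r = 1 := by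
  have h' : r ^ a.natAbs = 1 := by
    rcases Int.natAbs_eq a with he | he
    · rw [← zpow_natCast, ← he, h]
    · rw [← zpow_natCast, ← neg_neg (a.natAbs : ℤ), ← he, zpow_neg, h, inv_one]
  exact (pow_eq_one_iff_of_nonneg hr (Int.natAbs_ne_zero.mpr ha)).mp h'

lemma abs_of_rootOfUnity {ζ : ℂ} (h : IsRootOfUnity ζ) : ‖ζ‖ = 1 := by
  obtain ⟨n, hn, hζ⟩ := h
  have habs : ‖ζ‖ ^ n = 1 := by rw [← norm_pow, hζ, norm_one]
  exact (pow_eq_one_iff_of_nonneg (norm_nonneg ζ) hn.ne').mp habs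

/-- for every `(a, b) ≠ (0, 0)` and all roots of unity `ζ₁, ζ₂`, the curve
`C` is not contained in the torsion translate `{(ζ₁·x^a, ζ₂·x^b) : x ∈ ℂ^×}`. -/
theorem curveC_not_subset_torsion_translate (a b : ℤ) (hab : ¬(a = 0 ∧ b = 0))
    (ζ₁ ζ₂ : ℂ) (h₁ : IsRootOfUnity ζ₁) (h₂ : IsRootOfUnity ζ₂) :
    ∃ p ∈ curveC, ∀ x : ℂ, x ≠ 0 → ¬(p.1 = ζ₁ * x ^ a ∧ p.2 = ζ₂ * x ^ b) := by
  by_cases ha : a = 0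
  · refine ⟨(2, 4/3), ⟨by norm_num, by norm_num, by norm_num⟩, ?_⟩
    rintro x hx ⟨hp1, hp2⟩
    rw [ha, zpow_zero, mul_one] at hp1
    have h2 := abs_of_rootOfUnity h₁
    rw [← hp1] at h2
    simp only [Complex.norm_ofNat] at h2
    norm_num at h2
  · refine ⟨(1, 1/3), ⟨by norm_num, by norm_num, by norm_num⟩, ?_⟩
    rintro x hx ⟨hp1, hp2⟩
    have hax : ‖x‖ ^ a = 1 := by
      have h := congrArg (‖·‖) hp1
      rw [norm_mul, abs_of_rootOfUnity h₁, one_mul, norm_zpow, norm_one] at h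
      exact h.symm
    have hx1 : ‖x‖ = 1 := aux_zpow_eq_one (norm_nonneg x) ha hax
    have h := congrArg (‖·‖) hp2
    rw [norm_mul, abs_of_rootOfUnity h₂, one_mul, norm_zpow, hx1, one_zpow, norm_div, norm_one] at h
    norm_num at h
end

section
/- Let a, b ∈ ℤ be coprime with b ≠ 2a. Then the set of points (x₁, x₂) ∈ C for which there exist roots of unity ζ₁, ζ₂ and x ∈ ℂ^× with x₁ = ζ₁·x^a and x₂ = ζ₂·x^b is infinite. (Explicitly, for all integers q > p ≥ 2 the pairwise distinct points (e^{2πip/q}·3^{a/(2a−b)}, e^{4πip/q}·3^{b/(2a−b)}) belong to this set.) -/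
/-- The set of points of `C` lying on the torsion translate of the subtorus
`{(x^a, x^b)}` by some pair of roots of unity. -/
def torsionLocus (a b : ℤ) : Set (ℂ × ℂ) :=
  {p ∈ curveC | ∃ ζ₁ ζ₂ x : ℂ, IsRootOfUnity ζ₁ ∧ IsRootOfUnity ζ₂ ∧ x ≠ 0 ∧
    p.1 = ζ₁ * x ^ a ∧ p.2 = ζ₂ * x ^ b}

/-- for `a, b` coprime with `b ≠ 2a`, the set of points of `C` lying on
a torsion translate of the subtorus `{(x^a, x^b)}` is infinite. -/
theorem torsionLocus_infinite (a b : ℤ) (hco : IsCoprime a b) (h : b ≠ 2 * a) :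
    (torsionLocus a b).Infinite := by
  set d : ℤ := 2 * a - b with hd
  have hd0 : d ≠ 0 := by omega
  have hm : 0 < d.natAbs := Int.natAbs_pos.mpr hd0
  obtain ⟨y, hy⟩ := IsAlgClosed.exists_pow_nat_eq (3 : ℂ) hm
  have hy0 : y ≠ 0 := by
    intro hy0
    rw [hy0, zero_pow hm.ne'] at hy
    exact three_ne_zero hy.symm
  have hx : ∃ x : ℂ, x ≠ 0 ∧ x ^ d = (3 : ℂ) := by
    rcases le_or_gt 0 d with hdp | hdn
    · refine ⟨y, hy0, ?_⟩
      rw [show d = (d.natAbs : ℤ) by omega, zpow_natCast, hy]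
    · refine ⟨y⁻¹, inv_ne_zero hy0, ?_⟩
      have : y ^ d = (3 : ℂ)⁻¹ := by
        rw [show d = -(d.natAbs : ℤ) by omega, zpow_neg, zpow_natCast, hy]
      rw [inv_zpow, this, inv_inv]
  obtain ⟨x, hx0, hxd⟩ := hx
  have hxa : x ^ a ≠ 0 := zpow_ne_zero a hx0
  set ζ : ℕ → ℂ := fun n => Complex.exp (2 * Real.pi * Complex.I / ((n + 3 : ℕ) : ℂ)) with hζ
  have hprim : ∀ n : ℕ, IsPrimitiveRoot (ζ n) (n + 3) := fun n =>
    Complex.isPrimitiveRoot_exp (n + 3) (by omega)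
  apply Set.infinite_of_injective_forall_mem
    (f := fun n : ℕ => ((ζ n) * x ^ a, (ζ n) ^ 2 * x ^ b))
  · intro m n hmn
    have h1 : ζ m * x ^ a = ζ n * x ^ a := congrArg Prod.fst hmn
    have h2 : ζ m = ζ n := mul_right_cancel₀ hxa h1
    have := (h2 ▸ hprim m).unique (hprim n)
    omega
  · intro n
    have hζ0 : ζ n ≠ 0 := by
      intro h0
      have := (hprim n).pow_eq_one
      rw [h0, zero_pow (by omega : n + 3 ≠ 0)] at this
      exact one_ne_zero this.symm
    have hkey : (ζ n * x ^ a) ^ 2 = 3 * ((ζ n) ^ 2 * x ^ b) := by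
      have hxx : (x ^ a) ^ 2 = x ^ b * x ^ d := by
        rw [← zpow_natCast (x ^ a) 2, ← zpow_mul, ← zpow_add₀ hx0]
        norm_num
        ring_nf
        congr 1; omega
      rw [mul_pow, hxx, hxd]
      ring
    refine ⟨⟨mul_ne_zero hζ0 hxa, mul_ne_zero (pow_ne_zero 2 hζ0) (zpow_ne_zero b hx0), hkey⟩,
      ζ n, (ζ n) ^ 2, x, ⟨n + 3, by omega, (hprim n).pow_eq_one⟩,
      ⟨n + 3, by omega, by rw [← pow_mul, mul_comm 2, pow_mul, (hprim n).pow_eq_one, one_pow]⟩,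
      hx0, rfl, rfl⟩
end

section
/- The set of points (x₁, x₂) ∈ C for which there exist integers a, b with b ≠ 2a, roots of unity ζ₁, ζ₂ and x ∈ ℂ^× with x₁ = ζ₁·x^a and x₂ = ζ₂·x^b is dense in C for the topology induced from ℂ × ℂ. -/
/-- The full transverse Hodge locus of the curve `C`: points of `C` lying on a torsion
translate of some one-parameter subtorus `{(x^a, x^b)}` with `b ≠ 2a`. -/
def fullTorsionLocus : Set (ℂ × ℂ) :=
  {p ∈ curveC | ∃ a b : ℤ, b ≠ 2 * a ∧ ∃ ζ₁ ζ₂ x : ℂ,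
    IsRootOfUnity ζ₁ ∧ IsRootOfUnity ζ₂ ∧ x ≠ 0 ∧
    p.1 = ζ₁ * x ^ a ∧ p.2 = ζ₂ * x ^ b}

open Complex Real

noncomputable def hmap : ℝ × ℝ → ℂ × ℂ := fun st =>
  ((((3:ℝ) ^ st.1 : ℝ) : ℂ) * Complex.exp (2 * π * Complex.I * st.2),
   ((((3:ℝ) ^ st.1 : ℝ) : ℂ) * Complex.exp (2 * π * Complex.I * st.2)) ^ 2 / 3)

lemma hmap_continuous : Continuous hmap := by
  have h1 : Continuous fun st : ℝ × ℝ => (((3:ℝ) ^ st.1 : ℝ) : ℂ) := by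
    apply Complex.continuous_ofReal.comp
    have : (fun st : ℝ × ℝ => (3:ℝ) ^ st.1) = fun st : ℝ × ℝ => Real.exp (Real.log 3 * st.1) := by
      funext st
      rw [Real.rpow_def_of_pos (by norm_num)]
    rw [this]
    exact Real.continuous_exp.comp (continuous_const.mul continuous_fst)
  have h2 : Continuous fun st : ℝ × ℝ => Complex.exp (2 * π * Complex.I * st.2) :=
    Complex.continuous_exp.comp (continuous_const.mul
      (Complex.continuous_ofReal.comp continuous_snd))
  exact ((h1.mul h2).prodMk (((h1.mul h2).pow 2).div_const 3))

lemma rpow_den_zpow (q : ℚ) (m : ℤ) :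
    ((3:ℝ) ^ ((q.den:ℝ)⁻¹)) ^ m = (3:ℝ) ^ ((m : ℝ) / q.den) := by
  rw [← Real.rpow_intCast ((3:ℝ) ^ ((q.den:ℝ)⁻¹)) m, ← Real.rpow_mul (by norm_num)]
  congr 1
  rw [inv_mul_eq_div]

lemma exp_rat_root (q : ℚ) : IsRootOfUnity (Complex.exp (2 * π * Complex.I * q)) := by
  refine ⟨q.den, q.pos, ?_⟩
  rw [← Complex.exp_nat_mul]
  have hq : (q.den : ℂ) * (2 * π * Complex.I * q) = (q.num : ℂ) * (2 * π * Complex.I) := by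
    have : (q : ℂ) * q.den = q.num := by
      rw [Rat.cast_def]
      field_simp
    rw [show (q.den : ℂ) * (2 * π * Complex.I * q) = ((q:ℂ) * q.den) * (2 * π * Complex.I) by ring,
      this]
  rw [hq, Complex.exp_int_mul_two_pi_mul_I]

lemma hmap_mem (q₁ q₂ : ℚ) : hmap ((q₁ : ℝ), (q₂ : ℝ)) ∈ fullTorsionLocus := by
  have hd0 : (q₁.den : ℝ) ≠ 0 := Nat.cast_ne_zero.mpr q₁.den_nz
  set r : ℝ := (3:ℝ) ^ ((q₁.den:ℝ)⁻¹) with hr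
  have hrpos : 0 < r := Real.rpow_pos_of_pos (by norm_num) _
  set ζ : ℂ := Complex.exp (2 * π * Complex.I * q₂) with hζ
  have hζ0 : ζ ≠ 0 := Complex.exp_ne_zero _
  set z : ℂ := (((3:ℝ) ^ (q₁:ℝ) : ℝ) : ℂ) * ζ with hz
  have h3pos : (0:ℝ) < (3:ℝ) ^ (q₁:ℝ) := Real.rpow_pos_of_pos (by norm_num) _
  have hz0 : z ≠ 0 := mul_ne_zero (by exact_mod_cast h3pos.ne') hζ0
  have hx1 : z = ζ * ((r:ℂ)) ^ (q₁.num) := by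
    have : ((r:ℂ)) ^ (q₁.num) = (((3:ℝ) ^ (q₁:ℝ) : ℝ) : ℂ) := by
      rw [← Complex.ofReal_zpow, hr, rpow_den_zpow]
      congr 1
      rw [Rat.cast_def]
    rw [this, hz, mul_comm]
  have hx2 : z ^ 2 / 3 = ζ ^ 2 * ((r:ℂ)) ^ (2 * q₁.num - q₁.den) := by
    have hb : ((r:ℂ)) ^ (2 * q₁.num - (q₁.den:ℤ)) =
        (((3:ℝ) ^ (2 * (q₁:ℝ) - 1) : ℝ) : ℂ) := by
      rw [← Complex.ofReal_zpow, hr, rpow_den_zpow]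
      congr 1
      push_cast
      rw [Rat.cast_def]
      field_simp
    rw [hb, hz]
    have : ((3:ℝ) ^ (2 * (q₁:ℝ) - 1) : ℝ) = ((3:ℝ) ^ (q₁:ℝ)) ^ 2 / 3 := by
      rw [Real.rpow_sub (by norm_num), Real.rpow_one]
      congr 1
      rw [← Real.rpow_natCast ((3:ℝ) ^ (q₁:ℝ)) 2, ← Real.rpow_mul (by norm_num)]
      norm_num [mul_comm]
    rw [this]
    push_cast
    ring
  refine ⟨⟨hz0, ?_, ?_⟩, q₁.num, 2 * q₁.num - q₁.den, ?_, ζ, ζ ^ 2, (r:ℂ),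
    exp_rat_root q₂, ?_, by exact_mod_cast hrpos.ne', hx1, hx2⟩
  · show z ^ 2 / 3 ≠ 0
    simp [pow_ne_zero, hz0]
  · show z ^ 2 = 3 * (z ^ 2 / 3)
    ring
  · intro h
    have : (q₁.den : ℤ) = 0 := by omega
    exact q₁.den_nz (by exact_mod_cast this)
  · obtain ⟨n, hn, he⟩ := exp_rat_root q₂
    exact ⟨n, hn, by rw [← pow_mul, mul_comm, pow_mul, he, one_pow]⟩

/-- the full transverse Hodge locus of `C` is dense in `C` for the
topology induced from `ℂ × ℂ`. -/
theorem fullTorsionLocus_dense : curveC ⊆ closure fullTorsionLocus := by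
  intro p hp
  obtain ⟨h1, h2, h3⟩ := hp
  have hπ : (π : ℝ) ≠ 0 := Real.pi_ne_zero
  have hpeq : p = hmap (Real.logb 3 (‖p.1‖), Complex.arg p.1 / (2 * π)) := by
    have habs : ((3:ℝ) ^ (Real.logb 3 (‖p.1‖)) : ℝ) = ‖p.1‖ :=
      Real.rpow_logb (by norm_num) (by norm_num) (by simpa using h1)
    have harg : (2 * (π:ℂ) * Complex.I * ((Complex.arg p.1 / (2 * π) : ℝ) : ℂ)) =
        (Complex.arg p.1 : ℂ) * Complex.I := by
      have hπC : (π : ℂ) ≠ 0 := by exact_mod_cast hπ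
      push_cast
      field_simp
    have hp1 : (hmap (Real.logb 3 (‖p.1‖), Complex.arg p.1 / (2 * π))).1 = p.1 := by
      simp only [hmap, habs, harg]
      exact Complex.norm_mul_exp_arg_mul_I p.1
    have hp2 : (hmap (Real.logb 3 (‖p.1‖), Complex.arg p.1 / (2 * π))).2 = p.2 := by
      simp only [hmap]
      have : (((3:ℝ) ^ (Real.logb 3 (‖p.1‖)) : ℝ) : ℂ) *
          Complex.exp (2 * π * Complex.I * ((Complex.arg p.1 / (2 * π) : ℝ) : ℂ)) = p.1 := by
        rw [habs, harg]
        exact Complex.norm_mul_exp_arg_mul_I p.1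
      rw [this, h3]
      field_simp
    exact Prod.ext hp1.symm hp2.symm
  have hdense : DenseRange (fun q : ℚ × ℚ => ((q.1 : ℝ), (q.2 : ℝ))) :=
    DenseRange.prodMap Rat.denseRange_cast Rat.denseRange_cast
  have hmem : (Real.logb 3 (‖p.1‖), Complex.arg p.1 / (2 * π)) ∈
      closure (Set.range (fun q : ℚ × ℚ => ((q.1 : ℝ), (q.2 : ℝ)))) := by
    rw [hdense.closure_range]; trivial
  have : p ∈ hmap '' closure (Set.range (fun q : ℚ × ℚ => ((q.1 : ℝ), (q.2 : ℝ)))) :=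
    ⟨_, hmem, hpeq.symm⟩
  have hsub : hmap '' closure (Set.range (fun q : ℚ × ℚ => ((q.1 : ℝ), (q.2 : ℝ)))) ⊆
      closure (hmap '' Set.range (fun q : ℚ × ℚ => ((q.1 : ℝ), (q.2 : ℝ)))) :=
    image_closure_subset_closure_image hmap_continuous
  refine closure_mono ?_ (hsub this)
  rintro _ ⟨_, ⟨q, rfl⟩, rfl⟩
  exact hmap_mem q.1 q.2
end
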